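/- arXiv:2510.04624 — 13 statements merged into one kernel-verified Lean document; each statement's English description precedes it below -/
import Mathlib

section
/- Let B be an m×m matrix with non-negative integer entries such that every row sum and every column sum equals a common positive integer T. Then B can be written as a sum α₁M₁ + ... + α_dM_d where each M_k is an m×m permutation matrix, each α_k is a positive integer, α₁ + ... + α_d = T, and d ≤ m² - m + 1. -/
/-- Hall step: a positive integer bistochastic matrix has a permutation in its support. -/
lemma exists_perm_pos (m T : ℕ) (hT : 0 < T) (B : Matrix (Fin m) (Fin m) ℕ)
    (hrow : ∀ i, ∑ j, B i j = T) (hcol : ∀ j, ∑ i, B i j = T) :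
    ∃ σ : Equiv.Perm (Fin m), ∀ i, 0 < B i (σ i) := by
  set t : Fin m → Finset (Fin m) := fun i => Finset.univ.filter (fun j => 0 < B i j) with ht
  have hall : ∀ s : Finset (Fin m), s.card ≤ (s.biUnion t).card := by
    intro s
    have key : T * s.card ≤ T * (s.biUnion t).card := by
      calc T * s.card = ∑ i ∈ s, T := by rw [Finset.sum_const, smul_eq_mul, mul_comm]
        _ ≤ ∑ i ∈ s, ∑ j ∈ s.biUnion t, B i j := by
            apply Finset.sum_le_sum
            intro i hi
            have h1 : ∑ j ∈ t i, B i j = T := by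
              rw [← hrow i]
              apply Finset.sum_subset (Finset.filter_subset _ _)
              intro j _ hj
              simp only [ht, Finset.mem_filter, Finset.mem_univ, true_and, not_lt,
                Nat.le_zero] at hj
              exact hj
            rw [← h1]
            exact Finset.sum_le_sum_of_subset (Finset.subset_biUnion_of_mem t hi)
        _ = ∑ j ∈ s.biUnion t, ∑ i ∈ s, B i j := Finset.sum_comm
        _ ≤ ∑ j ∈ s.biUnion t, ∑ i, B i j := by
            apply Finset.sum_le_sum
            intro j _
            exact Finset.sum_le_sum_of_subset (Finset.subset_univ s)
        _ = ∑ j ∈ s.biUnion t, T := by simp [hcol]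
        _ = T * (s.biUnion t).card := by rw [Finset.sum_const, smul_eq_mul, mul_comm]
    exact Nat.le_of_mul_le_mul_left key hT
  obtain ⟨f, hf, hft⟩ := (Finset.all_card_le_biUnion_card_iff_exists_injective t).mp hall
  refine ⟨Equiv.ofBijective f (Finite.injective_iff_bijective.mp hf), fun i => ?_⟩
  have := hft i
  simp only [ht, Finset.mem_filter] at this
  exact this.2

lemma decomp_aux (m : ℕ) (hm : 0 < m) : ∀ s : ℕ, ∀ T : ℕ, 0 < T →
    ∀ B : Matrix (Fin m) (Fin m) ℕ,
    (∀ i, ∑ j, B i j = T) → (∀ j, ∑ i, B i j = T) →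
    (Finset.univ.filter (fun p : Fin m × Fin m => 0 < B p.1 p.2)).card ≤ s →
    ∃ d : ℕ, d + m ≤ s + 1 ∧
      ∃ (α : Fin d → ℕ) (σ : Fin d → Equiv.Perm (Fin m)),
        (∀ k, 0 < α k) ∧ (∑ k, α k = T) ∧
        ∀ i j, B i j = ∑ k, α k * (if σ k i = j then 1 else 0) := by
  intro s
  induction s using Nat.strong_induction_on with
  | _ s ih =>
  intro T hT B hrow hcol hsupp
  obtain ⟨σ, hσ⟩ := exists_perm_pos m T hT B hrow hcol
  haveI : Nonempty (Fin m) := Fin.pos_iff_nonempty.mp hm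
  have hne : (Finset.univ : Finset (Fin m)).Nonempty := Finset.univ_nonempty
  set a : ℕ := Finset.univ.inf' hne (fun i => B i (σ i)) with ha
  obtain ⟨i₀, -, hi₀⟩ := Finset.exists_mem_eq_inf' hne (fun i => B i (σ i))
  have ha_le : ∀ i, a ≤ B i (σ i) := fun i =>
    Finset.inf'_le _ (Finset.mem_univ i)
  have ha_pos : 0 < a := by rw [ha, hi₀]; exact hσ i₀
  -- support of B has at least m elements
  have hm_le_supp : m ≤ (Finset.univ.filter (fun p : Fin m × Fin m => 0 < B p.1 p.2)).card := by
    have : (Finset.univ.image (fun i : Fin m => (i, σ i))) ⊆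
        Finset.univ.filter (fun p : Fin m × Fin m => 0 < B p.1 p.2) := by
      intro p hp
      simp only [Finset.mem_image] at hp
      obtain ⟨i, -, rfl⟩ := hp
      simp [hσ i]
    calc m = (Finset.univ.image (fun i : Fin m => (i, σ i))).card := by
            rw [Finset.card_image_of_injective _ (fun x y hxy => (Prod.mk.injEq _ _ _ _ ▸ hxy).1)]
            simp
      _ ≤ _ := Finset.card_le_card this
  set B' : Matrix (Fin m) (Fin m) ℕ :=
    fun i j => B i j - a * (if σ i = j then 1 else 0) with hB'
  have hpt : ∀ i j, a * (if σ i = j then 1 else 0) ≤ B i j := by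
    intro i j
    by_cases h : σ i = j
    · subst h; simpa using ha_le i
    · simp [h]
  have hBsum : ∀ i j, B i j = a * (if σ i = j then 1 else 0) + B' i j := by
    intro i j
    exact (Nat.add_sub_cancel' (hpt i j)).symm
  have hrow' : ∀ i, ∑ j, B' i j = T - a := by
    intro i
    simp only [hB']
    rw [Finset.sum_tsub_distrib _ (fun j _ => hpt i j), hrow i]
    congr 1
    simp
  have hcol' : ∀ j, ∑ i, B' i j = T - a := by
    intro j
    simp only [hB']
    rw [Finset.sum_tsub_distrib _ (fun i _ => hpt i j), hcol j]
    congr 1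
    have : ∀ i : Fin m, (if σ i = j then (1:ℕ) else 0) = if i = σ.symm j then 1 else 0 := by
      intro i
      congr 1
      simp [Equiv.eq_symm_apply, eq_comm]
    simp only [this]
    simp
  by_cases hTa : T = a
  · -- B = a • P
    have hB'0 : ∀ i j, B' i j = 0 := by
      intro i j
      have h0 : ∑ j', B' i j' = 0 := by rw [hrow' i, hTa]; omega
      exact Finset.sum_eq_zero_iff.mp h0 j (Finset.mem_univ j)
    refine ⟨1, by omega, fun _ => T, fun _ => σ, fun _ => hT, by simp, ?_⟩
    intro i j
    have := hBsum i j
    rw [hB'0 i j, add_zero] at this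
    simp [this, hTa]
  · have haT : a < T := by
      have : a ≤ T := by
        have := ha_le i₀
        calc a ≤ B i₀ (σ i₀) := ha_le i₀
          _ ≤ ∑ j, B i₀ j := Finset.single_le_sum (fun j _ => Nat.zero_le _) (Finset.mem_univ _)
          _ = T := hrow i₀
      omega
    -- support strictly decreases
    have hsub : (Finset.univ.filter (fun p : Fin m × Fin m => 0 < B' p.1 p.2)) ⊂
        Finset.univ.filter (fun p : Fin m × Fin m => 0 < B p.1 p.2) := by
      constructor
      · intro p hp
        simp only [Finset.mem_filter, Finset.mem_univ, true_and] at hp ⊢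
        have := hpt p.1 p.2
        simp only [hB'] at hp
        omega
      · intro hcon
        have h1 : (i₀, σ i₀) ∈ Finset.univ.filter (fun p : Fin m × Fin m => 0 < B p.1 p.2) := by
          simp [hσ i₀]
        have h2 := hcon h1
        simp only [Finset.mem_filter, Finset.mem_univ, true_and, hB',
          if_pos rfl, if_true, mul_one] at h2
        have hab : a = B i₀ (σ i₀) := hi₀
        omega
    have hcard : (Finset.univ.filter (fun p : Fin m × Fin m => 0 < B' p.1 p.2)).card < s :=
      lt_of_lt_of_le (Finset.card_lt_card hsub) hsupp
    obtain ⟨d', hd', α', σ', hpos', hsum', hdec'⟩ :=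
      ih _ hcard (T - a) (by omega) B' hrow' hcol' (le_refl _)
    have hd'' : d' + m ≤ s := by omega
    refine ⟨d' + 1, by omega, Fin.cons a α', Fin.cons σ σ', ?_, ?_, ?_⟩
    · intro k
      refine Fin.cases ?_ ?_ k
      · exact ha_pos
      · exact fun k' => hpos' k'
    · rw [Fin.sum_univ_succ]
      simp only [Fin.cons_zero, Fin.cons_succ, hsum']
      omega
    · intro i j
      rw [hBsum i j, hdec' i j, Fin.sum_univ_succ]
      simp only [Fin.cons_zero, Fin.cons_succ]

/-- Birkhoff–von Neumann for scaled integer bistochastic matrices: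
an m×m matrix of non-negative integers with all row and column sums equal to T > 0
is a positive-integer combination of at most m² - m + 1 permutation matrices,
with coefficients summing to T. -/
theorem scaled_bistochastic_decomposition (m T : ℕ) (hT : 0 < T)
    (B : Matrix (Fin m) (Fin m) ℕ)
    (hrow : ∀ i, ∑ j, B i j = T) (hcol : ∀ j, ∑ i, B i j = T) :
    ∃ d : ℕ, d ≤ m ^ 2 - m + 1 ∧
      ∃ (α : Fin d → ℕ) (σ : Fin d → Equiv.Perm (Fin m)),
        (∀ k, 0 < α k) ∧ (∑ k, α k = T) ∧
        ∀ i j, B i j = ∑ k, α k * (if σ k i = j then 1 else 0) := by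
  rcases Nat.eq_zero_or_pos m with hm | hm
  · subst hm
    exact ⟨1, by norm_num, fun _ => T, fun _ => Equiv.refl _, fun _ => hT, by simp,
      fun i => i.elim0⟩
  · have hsupp : (Finset.univ.filter (fun p : Fin m × Fin m => 0 < B p.1 p.2)).card ≤ m ^ 2 := by
      calc _ ≤ (Finset.univ : Finset (Fin m × Fin m)).card := Finset.card_filter_le _ _
        _ = m ^ 2 := by simp [sq]
    obtain ⟨d, hd, α, σ, h1, h2, h3⟩ :=
      decomp_aux m hm (m ^ 2) T hT B hrow hcol hsupp
    have hmsq : m ≤ m ^ 2 := Nat.le_self_pow two_ne_zero m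
    exact ⟨d, by omega, α, σ, h1, h2, h3⟩
end

section
/- Let N = [n] be a set of agents, G a set of m ≥ n goods, and for each agent i a non-negative utility function u_i : G → ℝ≥0. A matching (injective map M : N → G) is Pareto optimal if and only if there exists a permutation π of N such that M is π-optimal. -/
lemma exists_perm_extend {n m : ℕ} (h : n ≤ m) (f : Fin n → Fin m) (hf : Function.Injective f) :
    ∃ σ : Equiv.Perm (Fin m), ∀ i : Fin n, σ (Fin.castLE h i) = f i := by
  classical
  let e1 : {x : Fin m // (x : ℕ) < n} ≃ Fin n :=
    { toFun := fun x => ⟨x.1, x.2⟩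
      invFun := fun i => ⟨Fin.castLE h i, i.2⟩
      left_inv := fun x => by ext; rfl
      right_inv := fun i => by ext; rfl }
  let e2 : Fin n ≃ {x : Fin m // x ∈ Set.range f} := Equiv.ofInjective f hf
  refine ⟨(e1.trans e2).extendSubtype, fun i => ?_⟩
  have hp : ((Fin.castLE h i : Fin m) : ℕ) < n := i.2
  rw [Equiv.extendSubtype_apply_of_mem (e1.trans e2) (Fin.castLE h i) hp]
  have : e1 ⟨Fin.castLE h i, hp⟩ = i := by ext; rfl
  simp [this, e2]

lemma exists_undominated {n m : ℕ} (hnm : n ≤ m) (u : Fin n → Fin m → ℝ)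
    (M : Fin n → Fin m) (hM : Function.Injective M)
    (hPO : ¬ ∃ M' : Fin n → Fin m, Function.Injective M' ∧
        (∀ i, u i (M i) ≤ u i (M' i)) ∧ (∃ i, u i (M i) < u i (M' i)))
    (s : Finset (Fin n)) (hs : s ≠ Finset.univ) :
    ∃ i, i ∉ s ∧ ∀ M' : Fin n → Fin m, Function.Injective M' →
      (∀ t ∈ s, u t (M t) ≤ u t (M' t)) → u i (M' i) ≤ u i (M i) := by
  classical
  by_contra hcon
  push_neg at hcon
  -- hcon : ∀ i ∉ s, ∃ M', Injective ∧ weak-on-s ∧ strict at i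
  have hi₀ : ∃ i : Fin n, i ∉ s := by
    by_contra hforall
    push_neg at hforall
    exact hs (Finset.eq_univ_iff_forall.mpr hforall)
  obtain ⟨i₀, hi₀s⟩ := hi₀
  set e : Fin n → Fin m := Fin.castLE hnm with he
  -- witnesses
  let W : Fin n → Fin n → Fin m := fun i => if hi : i ∉ s then (hcon i hi).choose else M
  have hWinj : ∀ i, Function.Injective (W i) := by
    intro i
    by_cases hi : i ∉ s
    · simpa [W, hi] using (hcon i hi).choose_spec.1
    · rw [not_not] at hi
      simpa [W, hi] using hM
  have hWweak : ∀ i, i ∉ s → ∀ t ∈ s, u t (M t) ≤ u t (W i t) := by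
    intro i hi
    simpa [W, hi] using (hcon i hi).choose_spec.2.1
  have hWstrict : ∀ i, i ∉ s → u i (M i) < u i (W i i) := by
    intro i hi
    simpa [W, hi] using (hcon i hi).choose_spec.2.2
  obtain ⟨Mh, hMh⟩ := exists_perm_extend hnm M hM
  have hWh : ∀ i : Fin n, ∃ σ : Equiv.Perm (Fin m), ∀ t : Fin n, σ (e t) = W i t :=
    fun i => exists_perm_extend hnm (W i) (hWinj i)
  let Wh : Fin n → Equiv.Perm (Fin m) := fun i => (hWh i).choose
  have hWhs : ∀ i t, Wh i (e t) = W i t := fun i => (hWh i).choose_spec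
  -- the walk
  let step : Fin m × Fin n → Fin m × Fin n := fun x =>
    let a' := Mh.symm (Wh x.2 x.1)
    ⟨a', if h : (a' : ℕ) < n then (if (⟨a', h⟩ : Fin n) ∈ s then x.2 else ⟨a', h⟩) else x.2⟩
  let A : ℕ → Fin m := fun p => (step^[p] (e i₀, i₀)).1
  let J : ℕ → Fin n := fun p => (step^[p] (e i₀, i₀)).2
  have hA0 : A 0 = e i₀ := rfl
  have hJ0 : J 0 = i₀ := rfl
  have hR1 : ∀ p, A (p + 1) = Mh.symm (Wh (J p) (A p)) := by
    intro p
    show (step^[p+1] _).1 = _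
    rw [Function.iterate_succ_apply']
  have hR1' : ∀ p, Mh (A (p + 1)) = Wh (J p) (A p) := by
    intro p; rw [hR1]; exact Mh.apply_symm_apply _
  have hR2 : ∀ p, J (p + 1) = if h : (A (p+1) : ℕ) < n then
      (if (⟨A (p+1), h⟩ : Fin n) ∈ s then J p else ⟨A (p+1), h⟩) else J p := by
    intro p
    show (step^[p+1] _).2 = _
    rw [Function.iterate_succ_apply', hR1 p]
  -- invariants
  have hInv1 : ∀ p, J p ∉ s := by
    intro p
    induction p with
    | zero => exact hi₀s
    | succ p ih =>
      rw [hR2 p]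
      split
      · split
        · exact ih
        · assumption
      · exact ih
  have hInv2 : ∀ p (h : (A p : ℕ) < n), (⟨A p, h⟩ : Fin n) ∉ s → e (J p) = A p := by
    intro p
    induction p with
    | zero => intro h hns; rw [hJ0, hA0]
    | succ p ih =>
      intro h hns
      rw [hR2 p, dif_pos h, if_neg hns]
      ext
      simp [e]
  -- pigeonhole: a repeat occurs
  have hex : ∃ l, ∃ k, k < l ∧ A k = A l := by
    obtain ⟨x, y, hxy, hAxy⟩ :=
      Fintype.exists_ne_map_eq_of_card_lt (fun x : Fin (m + 1) => A x) (by simp)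
    rcases lt_or_gt_of_ne (fun h : (x : ℕ) = (y : ℕ) => hxy (Fin.ext h)) with h | h
    · exact ⟨y, x, h, hAxy⟩
    · exact ⟨x, y, h, hAxy.symm⟩
  set l := Nat.find hex with hl
  obtain ⟨k, hkl, hAkl⟩ := Nat.find_spec hex
  have hdistinct : ∀ p q, p < q → q < l → A p ≠ A q := by
    intro p q hpq hql hA
    exact Nat.find_min hex hql ⟨p, hpq, hA⟩
  -- Good agents
  set G : ℕ → Prop := fun p => ∃ h : ((A p : ℕ) < n), (⟨A p, h⟩ : Fin n) ∉ s with hG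
  have hG0 : G 0 := by
    refine ⟨by simpa [hA0, e] using i₀.2, ?_⟩
    have : (⟨(A 0 : ℕ), by simpa [hA0, e] using i₀.2⟩ : Fin n) = i₀ := by
      ext; simp [hA0, e]
    rw [this]; exact hi₀s
  -- key claim: the cycle contains a good agent
  have hgood : ∃ p, k ≤ p ∧ p < l ∧ G p := by
    by_contra hng
    push_neg at hng
    set q := Nat.findGreatest G k with hq
    have hGq : G q := Nat.findGreatest_spec (Nat.zero_le k) hG0
    have hqk : q ≤ k := Nat.findGreatest_le k
    have hqk' : q < k := by
      rcases lt_or_eq_of_le hqk with h | h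
      · exact h
      · exact absurd (h ▸ hGq) (hng k le_rfl hkl)
    have hnG : ∀ p, q < p → p ≤ l → ¬ G p := by
      intro p h1 h2 hGp
      rcases le_or_gt p k with h | h
      · exact Nat.findGreatest_is_greatest h1 h hGp
      · rcases lt_or_eq_of_le h2 with h' | h'
        · exact hng p (le_of_lt h) h' hGp
        · subst h'
          have : G k := by
            show ∃ h : ((A k : ℕ) < n), (⟨A k, h⟩ : Fin n) ∉ s
            rw [hAkl]
            exact hGp
          exact hng k le_rfl hkl this
    have hJconst : ∀ p, q ≤ p → p ≤ l → J p = J q := by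
      intro p
      induction p with
      | zero => intro h1 _; rw [Nat.le_zero.mp h1]
      | succ p ih =>
        intro h1 h2
        rcases lt_or_eq_of_le h1 with h1' | h1'
        · have hqp : q ≤ p := Nat.lt_succ_iff.mp h1'
          have hnGp : ¬ G (p+1) := hnG (p+1) h1' h2
          have hJs : J (p+1) = J p := by
            rw [hR2 p]
            split
            next h =>
              rw [if_pos]
              by_contra hmem
              exact hnGp ⟨h, hmem⟩
            next h => rfl
          rw [hJs]
          exact ih hqp (le_trans (Nat.le_succ p) h2)
        · rw [← h1']
    obtain ⟨hqn, hqs⟩ := hGq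
    have hstep' : ∀ p, q ≤ p → p < l → A (p+1) = Mh.symm (Wh (J q) (A p)) := by
      intro p h1 h2
      rw [hR1 p, hJconst p h1 (le_of_lt h2)]
    have e1 : (k - 1) + 1 = k := by omega
    have e2 : (l - 1) + 1 = l := by omega
    have h1 : A ((k-1) + 1) = Mh.symm (Wh (J q) (A (k-1))) := hstep' (k-1) (by omega) (by omega)
    have h2 : A ((l-1) + 1) = Mh.symm (Wh (J q) (A (l-1))) := hstep' (l-1) (by omega) (by omega)
    rw [e1] at h1
    rw [e2] at h2
    have heq : A (k-1) = A (l-1) :=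
      (Wh (J q)).injective (Mh.symm.injective (by rw [← h1, ← h2, hAkl]))
    exact hdistinct (k-1) (l-1) (by omega) (by omega) heq
  -- build the improving matching by rotating along the cycle
  obtain ⟨pg, hpg1, hpg2, hpgG⟩ := hgood
  have hkl' : k ≤ l := le_of_lt hkl
  set L : List (Fin m) := (List.range (l - k)).map (fun t => A (k + t)) with hL
  have hLlen : L.length = l - k := by simp [hL]
  have hLget : ∀ (t : ℕ) (h : t < L.length), L[t] = A (k + t) := by
    intro t h
    simp [hL]
  have hLnodup : L.Nodup := by
    refine List.Nodup.map_on ?_ List.nodup_range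
    intro x hx y hy hxy
    simp only [List.mem_range] at hx hy
    by_contra hne
    rcases lt_or_gt_of_ne hne with h | h
    · exact hdistinct (k + x) (k + y) (by omega) (by omega) hxy
    · exact hdistinct (k + y) (k + x) (by omega) (by omega) hxy.symm
  have hmemL : ∀ x, x ∈ L ↔ ∃ t, t < l - k ∧ A (k + t) = x := by
    intro x
    simp [hL, List.mem_map, List.mem_range]
  set c : Equiv.Perm (Fin m) := L.formPerm with hc
  set M' : Fin n → Fin m := fun i => Mh (c (e i)) with hM'
  have hM'inj : Function.Injective M' := by
    intro a b hab
    have : e a = e b := c.injective (Mh.injective hab)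
    exact Fin.castLE_injective hnm this
  -- key rotation computation
  have hcase : ∀ i : Fin n, e i ∈ L →
      ∃ p, k ≤ p ∧ p < l ∧ A p = e i ∧ M' i = W (J p) i := by
    intro i hmem
    obtain ⟨t, ht, hAt⟩ := (hmemL (e i)).mp hmem
    have hlk : 0 < l - k := by omega
    refine ⟨k + t, by omega, by omega, hAt, ?_⟩
    have ht' : t < L.length := by rw [hLlen]; omega
    have hform := List.formPerm_apply_getElem L hLnodup t ht'
    have hLt : L[t] = e i := by rw [hLget t ht']; exact hAt
    have hcA : c (e i) = A (k + t + 1) := by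
      rw [hc, ← hLt, hform,
        hLget ((t + 1) % L.length) (Nat.mod_lt _ (by rw [hLlen]; omega))]
      rcases Nat.lt_or_ge (t + 1) (l - k) with h | h
      · have hidx : (t + 1) % L.length = t + 1 := by rw [hLlen]; exact Nat.mod_eq_of_lt h
        rw [hidx]
        congr 1
      · have hidx : (t + 1) % L.length = 0 := by
          rw [hLlen]
          have h2 : t + 1 = l - k := by omega
          rw [h2, Nat.mod_self]
        rw [hidx, Nat.add_zero, hAkl]
        congr 1
        omega
    rw [hM']
    show Mh (c (e i)) = W (J (k + t)) i
    rw [hcA, hR1' (k + t), hAt, hWhs]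
  have hfix : ∀ i : Fin n, e i ∉ L → M' i = M i := by
    intro i hmem
    rw [hM']
    show Mh (c (e i)) = M i
    rw [hc, List.formPerm_apply_of_notMem hmem]
    exact hMh i
  -- J p = i when A p = e i and i ∉ s
  have hJeq : ∀ (p : ℕ) (i : Fin n), A p = e i → i ∉ s → J p = i := by
    intro p i hAp his
    have hpn' : ((A p : ℕ) < n) := by rw [hAp]; exact i.2
    have hmk : (⟨(A p : ℕ), hpn'⟩ : Fin n) = i :=
      Fin.ext (show ((A p : Fin m) : ℕ) = (i : ℕ) from by rw [hAp]; rfl)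
    have heJ : e (J p) = A p := hInv2 p hpn' (by rw [hmk]; exact his)
    exact Fin.castLE_injective hnm (show e (J p) = e i from by rw [heJ, hAp])
  -- weak improvement for all agents
  have hweakAll : ∀ i : Fin n, u i (M i) ≤ u i (M' i) := by
    intro i
    by_cases hmem : e i ∈ L
    · obtain ⟨p, _, _, hAp, hMp⟩ := hcase i hmem
      rw [hMp]
      by_cases his : i ∈ s
      · exact hWweak (J p) (hInv1 p) i his
      · rw [hJeq p i hAp his]
        exact le_of_lt (hWstrict i his)
    · rw [hfix i hmem]
  -- strict improvement for the good agent
  obtain ⟨hpgn, hpgs⟩ := hpgG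
  set ig : Fin n := ⟨(A pg : ℕ), hpgn⟩ with hig
  have heig : e ig = A pg := by ext; rfl
  have higs : ig ∉ s := hpgs
  have hmemg : e ig ∈ L := by
    rw [hmemL]
    exact ⟨pg - k, by omega, by rw [heig]; congr 1; omega⟩
  have hstrictg : u ig (M ig) < u ig (M' ig) := by
    obtain ⟨p, _, _, hAp, hMp⟩ := hcase ig hmemg
    rw [hMp, hJeq p ig (by rw [hAp]) higs]
    exact hWstrict ig higs
  exact hPO ⟨M', hM'inj, hweakAll, ig, hstrictg⟩

/-- Characterization of Pareto optimal matchings: a matching M (injective map from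
agents to goods) is Pareto optimal iff it is π-optimal for some permutation π of the agents. -/
theorem paretoOptimal_iff_piOptimal (n m : ℕ) (hnm : n ≤ m)
    (u : Fin n → Fin m → ℝ) (hu : ∀ i g, 0 ≤ u i g)
    (M : Fin n → Fin m) (hM : Function.Injective M) :
    (¬ ∃ M' : Fin n → Fin m, Function.Injective M' ∧
        (∀ i, u i (M i) ≤ u i (M' i)) ∧ (∃ i, u i (M i) < u i (M' i)))
    ↔ ∃ π : Equiv.Perm (Fin n),
        ¬ ∃ M' : Fin n → Fin m, Function.Injective M' ∧
          (∃ i, u i (M i) < u i (M' i)) ∧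
          (∀ i, u i (M i) < u i (M' i) →
            ∀ i', π i' < π i → u i' (M i') ≤ u i' (M' i')) := by
  classical
  constructor
  · intro hPO
    rcases Nat.eq_zero_or_pos n with hn0 | hn0
    · subst hn0
      exact ⟨1, fun ⟨M', _, ⟨i, _⟩, _⟩ => i.elim0⟩
    -- greedy construction of the priority order
    set P : Finset (Fin n) → Fin n → Prop := fun s i =>
      ∀ M' : Fin n → Fin m, Function.Injective M' →
        (∀ t ∈ s, u t (M t) ≤ u t (M' t)) → u i (M' i) ≤ u i (M i) with hP
    set pick : Finset (Fin n) → Fin n := fun s =>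
      if h : ∃ i, i ∉ s ∧ P s i then h.choose else ⟨0, hn0⟩ with hpickdef
    have hpick : ∀ s, s ≠ Finset.univ → pick s ∉ s ∧ P s (pick s) := by
      intro s hs
      have h : ∃ i, i ∉ s ∧ P s i := exists_undominated hnm u M hM hPO s hs
      rw [hpickdef]
      simp only [dif_pos h]
      exact h.choose_spec
    set S : ℕ → Finset (Fin n) := fun p =>
      Nat.rec ∅ (fun _ Sp => insert (pick Sp) Sp) p with hS
    have hS0 : S 0 = ∅ := rfl
    have hSsucc : ∀ p, S (p + 1) = insert (pick (S p)) (S p) := fun p => rfl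
    have hScard : ∀ p, (S p).card ≤ p := by
      intro p
      induction p with
      | zero => simp [hS0]
      | succ p ih =>
        rw [hSsucc]
        exact le_trans (Finset.card_insert_le _ _) (Nat.succ_le_succ ih)
    have hSne : ∀ p, p < n → S p ≠ Finset.univ := by
      intro p hp heq
      have := hScard p
      rw [heq, Finset.card_univ, Fintype.card_fin] at this
      omega
    have hSmono : ∀ p q, p ≤ q → S p ⊆ S q := by
      intro p q hpq
      induction q with
      | zero => rw [Nat.le_zero.mp hpq]
      | succ q ih =>
        rcases Nat.lt_or_ge p (q + 1) with h | h
        · refine subset_trans (ih (Nat.lt_succ_iff.mp h)) ?_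
          rw [hSsucc]
          exact Finset.subset_insert _ _
        · rw [Nat.le_antisymm hpq h]
    have hSmem : ∀ p x, x ∈ S p ↔ ∃ q, q < p ∧ pick (S q) = x := by
      intro p
      induction p with
      | zero => simp [hS0]
      | succ p ih =>
        intro x
        rw [hSsucc, Finset.mem_insert]
        constructor
        · rintro (h | h)
          · exact ⟨p, Nat.lt_succ_self p, h.symm⟩
          · obtain ⟨q, hq, hq2⟩ := (ih x).mp h
            exact ⟨q, Nat.lt_succ_of_lt hq, hq2⟩
        · rintro ⟨q, hq, hq2⟩
          rcases Nat.lt_or_ge q p with h | h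
          · exact Or.inr ((ih x).mpr ⟨q, h, hq2⟩)
          · have : q = p := by omega
            subst this
            exact Or.inl hq2.symm
    set r : Fin n → Fin n := fun p => pick (S p) with hr
    have hrinj : Function.Injective r := by
      intro p q hpq
      by_contra hne
      have key : ∀ a b : Fin n, (a : ℕ) < (b : ℕ) → r a ≠ r b := by
        intro a b hab hreq
        have h1 : r a ∈ S b :=
          hSmono ((a : ℕ) + 1) b hab ((hSmem _ _).mpr ⟨a, Nat.lt_succ_self _, rfl⟩)
        have h2 : r b ∉ S b := (hpick (S b) (hSne b b.2)).1
        rw [← hreq] at h2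
        exact h2 h1
      rcases lt_or_gt_of_ne (fun h : (p : ℕ) = (q : ℕ) => hne (Fin.ext h)) with h | h
      · exact key p q h hpq
      · exact key q p h hpq.symm
    have hrbij : Function.Bijective r := Finite.injective_iff_bijective.mp hrinj
    set ρ : Equiv.Perm (Fin n) := Equiv.ofBijective r hrbij with hρ
    refine ⟨ρ.symm, ?_⟩
    rintro ⟨M', hM'inj, ⟨i, hstrict⟩, hcond⟩
    set ki : Fin n := ρ.symm i with hki
    have hrki : r ki = i := by
      show ρ ki = i
      rw [hki, Equiv.apply_symm_apply]
    have hprop : P (S ki) i := by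
      have h2 := (hpick (S ki) (hSne ki ki.2)).2
      have h3 : pick (S (ki : ℕ)) = i := hrki
      rwa [h3] at h2
    have hweakS : ∀ t ∈ S (ki : ℕ), u t (M t) ≤ u t (M' t) := by
      intro t ht
      obtain ⟨q, hq, hq2⟩ := (hSmem _ t).mp ht
      have hqn : q < n := lt_trans hq ki.2
      have hρt : ρ.symm t = ⟨q, hqn⟩ := by
        have : r ⟨q, hqn⟩ = t := hq2
        rw [← this]
        exact ρ.symm_apply_apply _
      have hlt : ρ.symm t < ρ.symm i := by
        rw [hρt, ← hki]
        exact hq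
      exact hcond i hstrict t hlt
    exact absurd (hprop M' hM'inj hweakS) (not_le.mpr hstrict)
  · rintro ⟨π, hπ⟩ ⟨M', hinj, hweak, i, hstrict⟩
    exact hπ ⟨M', hinj, ⟨i, hstrict⟩, fun j _ i' _ => hweak i'⟩
end

section
/- Let N = [n] be agents and G goods with utilities u_i : G → ℝ≥0, and let π : N → [n] be a permutation. Define the rank r(i,g) = |{g' ∈ G : u_i(g') ≤ u_i(g)}|, and assign to each edge (i,g) of the complete bipartite graph between N and G the weight w(i,g) = r(i,g) · m^{n−π(i)}, where m = |G|. Then any matching M maximizing the total weight Σ_{i∈N} w(i, M(i)) is π-optimal. -/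
lemma geom_nat (m : ℕ) (hm : 1 ≤ m) : ∀ K : ℕ,
    (∑ e ∈ Finset.range K, (m - 1) * m ^ e) + 1 = m ^ K := by
  intro K
  induction K with
  | zero => simp
  | succ K ih =>
      rw [Finset.sum_range_succ, pow_succ]
      have h : (m - 1) * m ^ K + m ^ K = m ^ K * m := by
        rw [← Nat.succ_mul, Nat.succ_eq_add_one, Nat.sub_add_cancel hm, mul_comm]
      omega

/-- A maximum weight matching with weights w(i,g) = r(i,g) · m^(n − π(i))
(ranks r(i,g) = number of goods valued at most u_i(g), π a priority permutation,
written 0-indexed as m^(n − 1 − π(i))) is π-optimal. -/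
theorem maxWeightMatching_piOptimal (n m : ℕ) (hnm : n ≤ m)
    (u : Fin n → Fin m → ℝ) (π : Equiv.Perm (Fin n))
    (r : Fin n → Fin m → ℕ)
    (hr : ∀ i g, r i g = (Finset.univ.filter (fun g' => u i g' ≤ u i g)).card)
    (w : Fin n → Fin m → ℕ)
    (hw : ∀ i g, w i g = r i g * m ^ (n - 1 - (π i : ℕ)))
    (M : Fin n → Fin m) (hM : Function.Injective M)
    (hmax : ∀ M' : Fin n → Fin m, Function.Injective M' →
      ∑ i, w i (M' i) ≤ ∑ i, w i (M i)) :
    ¬ ∃ M' : Fin n → Fin m, Function.Injective M' ∧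
      (∃ i, u i (M i) < u i (M' i)) ∧
      (∀ i, u i (M i) < u i (M' i) →
        ∀ i', π i' < π i → u i' (M i') ≤ u i' (M' i')) := by
  rintro ⟨M', hM', ⟨i₀, hi₀⟩, hcond⟩
  have hn : 1 ≤ n := i₀.pos
  have hm : 1 ≤ m := le_trans hn hnm
  -- basic rank facts
  have hmono : ∀ i g g', u i g ≤ u i g' → r i g ≤ r i g' := by
    intro i g g' h
    rw [hr, hr]
    apply Finset.card_le_card
    intro x hx
    simp only [Finset.mem_filter, Finset.mem_univ, true_and] at hx ⊢
    exact le_trans hx h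
  have hstrict : ∀ i g g', u i g < u i g' → r i g < r i g' := by
    intro i g g' h
    rw [hr, hr]
    apply Finset.card_lt_card
    constructor
    · intro x hx
      simp only [Finset.mem_filter, Finset.mem_univ, true_and] at hx ⊢
      exact le_trans hx h.le
    · intro hsub
      have := hsub (by simp : g' ∈ Finset.univ.filter (fun g'' => u i g'' ≤ u i g'))
      simp only [Finset.mem_filter, Finset.mem_univ, true_and] at this
      exact absurd this (not_le.mpr h)
  have hr1 : ∀ i g, 1 ≤ r i g := by
    intro i g
    rw [hr]
    apply Finset.card_pos.mpr
    exact ⟨g, by simp⟩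
  have hrm : ∀ i g, r i g ≤ m := by
    intro i g
    rw [hr]
    simpa using Finset.card_le_card (Finset.filter_subset (fun g' => u i g' ≤ u i g) Finset.univ)
  set k : ℕ := (π i₀ : ℕ) with hk
  -- pointwise inequality
  have point : ∀ i : Fin n,
      w i (M i) + (if i = i₀ then m ^ (n - 1 - k) else 0) ≤
      w i (M' i) + (if π i₀ < π i then (m - 1) * m ^ (n - 1 - (π i : ℕ)) else 0) := by
    intro i
    rcases lt_trichotomy (π i) (π i₀) with hlt | heq | hgt
    · have hne : i ≠ i₀ := fun h => absurd (h ▸ hlt) (lt_irrefl _)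
      rw [if_neg hne, if_neg (not_lt.mpr hlt.le)]
      have hu : u i (M i) ≤ u i (M' i) := hcond i₀ hi₀ i hlt
      rw [hw, hw]
      simpa using Nat.mul_le_mul_right _ (hmono _ _ _ hu)
    · have hii : i = i₀ := π.injective heq
      subst hii
      rw [if_pos rfl, if_neg (lt_irrefl _)]
      rw [hw, hw]
      have : r i (M i) + 1 ≤ r i (M' i) := hstrict _ _ _ hi₀
      calc r i (M i) * m ^ (n - 1 - k) + m ^ (n - 1 - k)
          = (r i (M i) + 1) * m ^ (n - 1 - k) := by ring
        _ ≤ r i (M' i) * m ^ (n - 1 - k) + 0 :=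
            by simpa using Nat.mul_le_mul_right _ this
    · have hne : i ≠ i₀ := fun h => absurd (h ▸ hgt) (lt_irrefl _)
      rw [if_neg hne, if_pos hgt]
      rw [hw, hw]
      have h1 : r i (M i) * m ^ (n - 1 - (π i : ℕ)) ≤ m * m ^ (n - 1 - (π i : ℕ)) :=
        Nat.mul_le_mul_right _ (hrm _ _)
      have h2 : 1 * m ^ (n - 1 - (π i : ℕ)) ≤ r i (M' i) * m ^ (n - 1 - (π i : ℕ)) :=
        Nat.mul_le_mul_right _ (hr1 _ _)
      have h3 : m * m ^ (n - 1 - (π i : ℕ)) =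
          1 * m ^ (n - 1 - (π i : ℕ)) + (m - 1) * m ^ (n - 1 - (π i : ℕ)) := by
        rw [← Nat.add_mul]
        congr 1
        omega
      omega
  -- sum the pointwise inequality
  have hsum : ∑ i, w i (M i) + m ^ (n - 1 - k) ≤
      ∑ i, w i (M' i) +
        ∑ i ∈ Finset.univ.filter (fun i => π i₀ < π i),
          (m - 1) * m ^ (n - 1 - (π i : ℕ)) := by
    have := Finset.sum_le_sum (fun i (_ : i ∈ Finset.univ) => point i)
    have e1 : ∑ i : Fin n, (if i = i₀ then m ^ (n - 1 - k) else 0) = m ^ (n - 1 - k) := by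
      simp
    have e2 : ∑ i : Fin n, (if π i₀ < π i then (m - 1) * m ^ (n - 1 - (π i : ℕ)) else 0) =
        ∑ i ∈ Finset.univ.filter (fun i => π i₀ < π i),
          (m - 1) * m ^ (n - 1 - (π i : ℕ)) := (Finset.sum_filter _ _).symm
    rw [Finset.sum_add_distrib, Finset.sum_add_distrib, e1, e2] at this
    exact this
  -- bound the tail sum
  have htail : ∑ i ∈ Finset.univ.filter (fun i => π i₀ < π i),
      (m - 1) * m ^ (n - 1 - (π i : ℕ)) < m ^ (n - 1 - k) := by
    set S := Finset.univ.filter (fun i => π i₀ < π i) with hS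
    have hinj : Set.InjOn (fun i => n - 1 - ((π i : ℕ))) S := by
      intro a ha b hb hab
      simp only at hab
      have h1 : (π a : ℕ) < n := (π a).isLt
      have h2 : (π b : ℕ) < n := (π b).isLt
      have : (π a : ℕ) = (π b : ℕ) := by omega
      exact π.injective (Fin.ext this)
    have himg : ∑ e ∈ S.image (fun i => n - 1 - ((π i : ℕ))), (m - 1) * m ^ e =
        ∑ i ∈ S, (m - 1) * m ^ (n - 1 - ((π i : ℕ))) :=
      Finset.sum_image (fun a ha b hb => hinj ha hb)
    rw [← himg]
    have hsub : S.image (fun i => n - 1 - ((π i : ℕ))) ⊆ Finset.range (n - 1 - k) := by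
      intro e he
      simp only [Finset.mem_image, hS, Finset.mem_filter, Finset.mem_univ, true_and] at he
      obtain ⟨i, hgt, rfl⟩ := he
      rw [Finset.mem_range]
      have h1 : (π i : ℕ) < n := (π i).isLt
      have h2 : k < (π i : ℕ) := hgt
      omega
    calc ∑ e ∈ S.image (fun i => n - 1 - ((π i : ℕ))), (m - 1) * m ^ e
        ≤ ∑ e ∈ Finset.range (n - 1 - k), (m - 1) * m ^ e :=
          Finset.sum_le_sum_of_subset hsub
      _ < m ^ (n - 1 - k) := by
          have := geom_nat m hm (n - 1 - k)
          omega
  have key : ∑ i, w i (M i) < ∑ i, w i (M' i) := by omega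
  exact absurd (hmax M' hM') (not_le.mpr key)
end

section
/- Let agents N and goods G have binary utilities u_i : G → {0,1}. Let M' be a matching maximizing the number of agents i with u_i(M'(i)) = 1, and let G' be the set of goods matched by M' to such agents. Then for any matching M there exists a matching M* such that u_i(M*(i)) ≥ u_i(M(i)) for all agents i, and every good matched by M* to an agent who values it is contained in G'. -/
/-- Any function injective on a finset `s` of `Fin n` into `Fin m` (with `n ≤ m`)
can be modified outside `s` to become globally injective. -/
lemma extend_injOn {n m : ℕ} (hnm : n ≤ m) (s : Finset (Fin n)) (f : Fin n → Fin m)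
    (hf : Set.InjOn f (s : Set (Fin n))) :
    ∃ g : Fin n → Fin m, Function.Injective g ∧ ∀ i ∈ s, g i = f i := by
  classical
  set t : Finset (Fin m) := s.image f with ht
  have hts : t.card = s.card := Finset.card_image_of_injOn hf
  have hcard : Fintype.card ↥(sᶜ) ≤ Fintype.card ↥(tᶜ) := by
    have h1 : s.card ≤ n := by
      simpa using Finset.card_le_univ s
    simp only [Fintype.card_coe, Finset.card_compl, Fintype.card_fin, hts]
    omega
  obtain ⟨e⟩ := Function.Embedding.nonempty_of_card_le hcard
  refine ⟨fun i => if h : i ∈ s then f i else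
      (e ⟨i, Finset.mem_compl.2 h⟩ : ↥(tᶜ)), ?_, ?_⟩
  · intro a b hab
    by_cases ha : a ∈ s <;> by_cases hb : b ∈ s <;> simp only [ha, hb, dif_pos, dif_neg,
      not_false_iff] at hab
    · exact hf ha hb hab
    · exfalso
      have h1 : f a ∈ t := Finset.mem_image_of_mem f ha
      have h2 : ((e ⟨b, Finset.mem_compl.2 hb⟩ : ↥(tᶜ)) : Fin m) ∈ tᶜ :=
        (e ⟨b, Finset.mem_compl.2 hb⟩).2
      rw [hab] at h1
      exact (Finset.mem_compl.1 h2) h1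
    · exfalso
      have h1 : f b ∈ t := Finset.mem_image_of_mem f hb
      have h2 : ((e ⟨a, Finset.mem_compl.2 ha⟩ : ↥(tᶜ)) : Fin m) ∈ tᶜ :=
        (e ⟨a, Finset.mem_compl.2 ha⟩).2
      rw [← hab] at h1
      exact (Finset.mem_compl.1 h2) h1
    · exact congrArg Subtype.val (e.injective (Subtype.ext hab))
  · intro i hi
    simp [hi]

/-- Hall step: the agents satisfied by `M` can be injectively matched to valued goods
inside `G'`. -/
lemma hall_step (n m : ℕ) (hnm : n ≤ m)
    (u : Fin n → Fin m → ℕ)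
    (M' : Fin n → Fin m) (hM' : Function.Injective M')
    (hmax : ∀ M'' : Fin n → Fin m, Function.Injective M'' →
      (Finset.univ.filter (fun i => u i (M'' i) = 1)).card ≤
        (Finset.univ.filter (fun i => u i (M' i) = 1)).card)
    (G' : Finset (Fin m))
    (hG' : G' = (Finset.univ.filter (fun i => u i (M' i) = 1)).image M')
    (M : Fin n → Fin m) (hM : Function.Injective M) :
    ∃ f : (↥(Finset.univ.filter (fun i => u i (M i) = 1))) → Fin m,
      Function.Injective f ∧ ∀ x, u x.1 (f x) = 1 ∧ f x ∈ G' := by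
  classical
  set SM : Finset (Fin n) := Finset.univ.filter (fun i => u i (M i) = 1) with hSM
  set S' : Finset (Fin n) := Finset.univ.filter (fun i => u i (M' i) = 1) with hS'
  set t : ↥SM → Finset (Fin m) := fun x => G'.filter (fun g => u x.1 g = 1) with htdef
  have hall : ∀ s : Finset ↥SM, s.card ≤ (s.biUnion t).card := by
    intro s
    set W : Finset (Fin m) := s.biUnion t with hW
    set A : Finset (Fin n) := s.image Subtype.val with hA
    have hAcard : A.card = s.card := Finset.card_image_of_injective _ Subtype.val_injective
    have hASM : ∀ i ∈ A, u i (M i) = 1 := by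
      intro i hi
      obtain ⟨x, hx, rfl⟩ := Finset.mem_image.1 hi
      have := x.2
      simp only [hSM, Finset.mem_filter] at this
      exact this.2
    set P : Finset (Fin n) := S'.filter (fun i => M' i ∈ W) with hP
    have hPS' : P ⊆ S' := Finset.filter_subset _ _
    -- members of A that are in S' are in P
    have hAS'P : ∀ i, i ∈ A → i ∈ S' → i ∈ P := by
      intro i hiA hiS'
      obtain ⟨x, hx, rfl⟩ := Finset.mem_image.1 hiA
      have hi1 : u x.1 (M' x.1) = 1 := by
        simp only [hS', Finset.mem_filter] at hiS'; exact hiS'.2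
      have hig : M' x.1 ∈ G' := by
        rw [hG']
        exact Finset.mem_image_of_mem M' hiS'
      have : M' x.1 ∈ t x := by simp [htdef, hig, hi1]
      exact Finset.mem_filter.2 ⟨hiS', Finset.mem_biUnion.2 ⟨x, hx, this⟩⟩
    have hPW : P.card ≤ W.card := by
      apply Finset.card_le_card_of_injOn M'
      · intro i hi
        exact (Finset.mem_filter.1 hi).2
      · exact fun a _ b _ h => hM' h
    -- the combined matching
    set N : Fin n → Fin m := fun j => if j ∈ A then M j else M' j with hN
    set D : Finset (Fin n) := A ∪ (S' \ P) with hD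
    have hdisj : ∀ i, i ∈ A → i ∈ S' \ P → False := by
      intro i hiA hiSP
      obtain ⟨h1, h2⟩ := Finset.mem_sdiff.1 hiSP
      exact h2 (hAS'P i hiA h1)
    have hDsat : ∀ j ∈ D, u j (N j) = 1 := by
      intro j hj
      rcases Finset.mem_union.1 hj with hjA | hjS
      · simp only [hN, if_pos hjA]
        exact hASM j hjA
      · have hjA : j ∉ A := fun h => hdisj j h hjS
        simp only [hN, if_neg hjA]
        have := (Finset.mem_sdiff.1 hjS).1
        simp only [hS', Finset.mem_filter] at this
        exact this.2
    -- a good of A that lies in G' lies in W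
    have hAG'W : ∀ i, i ∈ A → M i ∈ G' → M i ∈ W := by
      intro i hiA hig
      obtain ⟨x, hx, rfl⟩ := Finset.mem_image.1 hiA
      have : M x.1 ∈ t x := by simp [htdef, hig, hASM _ hiA]
      exact Finset.mem_biUnion.2 ⟨x, hx, this⟩
    have hM'G' : ∀ i, i ∈ S' → M' i ∈ G' := by
      intro i hi
      rw [hG']
      exact Finset.mem_image_of_mem M' hi
    have hDinj : Set.InjOn N (D : Set (Fin n)) := by
      intro a ha b hb hab
      rw [Finset.mem_coe] at ha hb
      by_cases haA : a ∈ A <;> by_cases hbA : b ∈ A <;>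
        simp only [hN, if_pos, if_neg, haA, hbA, not_false_iff] at hab
      · exact hM hab
      · -- a ∈ A, b ∈ S' \ P, M a = M' b
        exfalso
        have hbS : b ∈ S' \ P := (Finset.mem_union.1 hb).resolve_left hbA
        have hbG : M' b ∈ G' := hM'G' b (Finset.mem_sdiff.1 hbS).1
        have haG : M a ∈ G' := hab ▸ hbG
        have : M a ∈ W := hAG'W a haA haG
        rw [hab] at this
        exact (Finset.mem_sdiff.1 hbS).2
          (Finset.mem_filter.2 ⟨(Finset.mem_sdiff.1 hbS).1, this⟩)
      · exfalso
        have haS : a ∈ S' \ P := (Finset.mem_union.1 ha).resolve_left haA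
        have haG : M' a ∈ G' := hM'G' a (Finset.mem_sdiff.1 haS).1
        have hbG : M b ∈ G' := hab ▸ haG
        have : M b ∈ W := hAG'W b hbA hbG
        rw [← hab] at this
        exact (Finset.mem_sdiff.1 haS).2
          (Finset.mem_filter.2 ⟨(Finset.mem_sdiff.1 haS).1, this⟩)
      · exact hM' hab
    obtain ⟨Mext, hMextInj, hMexteq⟩ := extend_injOn hnm D N hDinj
    have hsub : D ⊆ Finset.univ.filter (fun j => u j (Mext j) = 1) := by
      intro j hj
      simp only [Finset.mem_filter, Finset.mem_univ, true_and]
      rw [hMexteq j hj]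
      exact hDsat j hj
    have hDle : D.card ≤ S'.card :=
      le_trans (Finset.card_le_card hsub) (hmax Mext hMextInj)
    have hDcard : D.card = A.card + (S' \ P).card := by
      rw [hD]
      apply Finset.card_union_of_disjoint
      exact Finset.disjoint_left.2 fun i hi hi' => hdisj i hi hi'
    have hSP : (S' \ P).card + P.card = S'.card := Finset.card_sdiff_add_card_eq_card hPS'
    omega
  obtain ⟨f, hfinj, hft⟩ := (Finset.all_card_le_biUnion_card_iff_exists_injective t).1 hall
  refine ⟨f, hfinj, fun x => ?_⟩
  have := hft x
  simp only [htdef, Finset.mem_filter] at this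
  exact ⟨this.2, this.1⟩

/-- One improvement step: either produce the desired dominating matching, or a
dominating matching with strictly more satisfied agents. -/
lemma step_lemma (n m : ℕ) (hnm : n ≤ m)
    (u : Fin n → Fin m → ℕ) (hbin : ∀ i g, u i g = 0 ∨ u i g = 1)
    (M' : Fin n → Fin m) (hM' : Function.Injective M')
    (hmax : ∀ M'' : Fin n → Fin m, Function.Injective M'' →
      (Finset.univ.filter (fun i => u i (M'' i) = 1)).card ≤
        (Finset.univ.filter (fun i => u i (M' i) = 1)).card)
    (G' : Finset (Fin m))
    (hG' : G' = (Finset.univ.filter (fun i => u i (M' i) = 1)).image M')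
    (M : Fin n → Fin m) (hM : Function.Injective M) :
    ∃ M0 : Fin n → Fin m, Function.Injective M0 ∧
      (∀ i, u i (M i) ≤ u i (M0 i)) ∧
      ((∀ i, u i (M0 i) = 1 → M0 i ∈ G') ∨
        (Finset.univ.filter (fun i => u i (M i) = 1)).card <
          (Finset.univ.filter (fun i => u i (M0 i) = 1)).card) := by
  classical
  set SM : Finset (Fin n) := Finset.univ.filter (fun i => u i (M i) = 1) with hSM
  obtain ⟨f, hfinj, hft⟩ := hall_step n m hnm u M' hM' hmax G' hG' M hM
  set F : Fin n → Fin m := fun i => if h : i ∈ SM then f ⟨i, h⟩ else M i with hF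
  have hFinj : Set.InjOn F (SM : Set (Fin n)) := by
    intro a ha b hb hab
    rw [Finset.mem_coe] at ha hb
    simp only [hF, dif_pos ha, dif_pos hb] at hab
    exact congrArg Subtype.val (hfinj hab)
  obtain ⟨M0, hM0inj, hM0eq⟩ := extend_injOn hnm SM F hFinj
  have hM0sat : ∀ i (h : i ∈ SM), u i (M0 i) = 1 ∧ M0 i ∈ G' := by
    intro i h
    rw [hM0eq i h]
    simp only [hF, dif_pos h]
    exact hft ⟨i, h⟩
  have hdom : ∀ i, u i (M i) ≤ u i (M0 i) := by
    intro i
    rcases hbin i (M i) with h0 | h1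
    · rw [h0]; exact Nat.zero_le _
    · have hi : i ∈ SM := by simp [hSM, h1]
      rw [h1, (hM0sat i hi).1]
  refine ⟨M0, hM0inj, hdom, ?_⟩
  by_cases hgood : ∀ i, u i (M0 i) = 1 → M0 i ∈ G'
  · exact Or.inl hgood
  · right
    push_neg at hgood
    obtain ⟨i0, hi01, hi0G⟩ := hgood
    have hi0SM : i0 ∉ SM := fun h => hi0G (hM0sat i0 h).2
    have hsub : insert i0 SM ⊆ Finset.univ.filter (fun i => u i (M0 i) = 1) := by
      intro j hj
      rcases Finset.mem_insert.1 hj with rfl | hj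
      · simp [hi01]
      · simp [(hM0sat j hj).1]
    calc SM.card < (insert i0 SM).card := by
          rw [Finset.card_insert_of_notMem hi0SM]; omega
      _ ≤ _ := Finset.card_le_card hsub

/-- Under binary valuations, if M' is a maximum matching (maximizing the number of
satisfied agents) and G' is the set of goods it assigns to satisfied agents, then any
matching M is weakly Pareto dominated by a matching M* whose valued goods all lie in G'. -/
theorem binary_matching_dominated_within_maximum (n m : ℕ) (hnm : n ≤ m)
    (u : Fin n → Fin m → ℕ) (hbin : ∀ i g, u i g = 0 ∨ u i g = 1)
    (M' : Fin n → Fin m) (hM' : Function.Injective M')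
    (hmax : ∀ M'' : Fin n → Fin m, Function.Injective M'' →
      (Finset.univ.filter (fun i => u i (M'' i) = 1)).card ≤
        (Finset.univ.filter (fun i => u i (M' i) = 1)).card)
    (G' : Finset (Fin m))
    (hG' : G' = (Finset.univ.filter (fun i => u i (M' i) = 1)).image M') :
    ∀ M : Fin n → Fin m, Function.Injective M →
      ∃ Mstar : Fin n → Fin m, Function.Injective Mstar ∧
        (∀ i, u i (M i) ≤ u i (Mstar i)) ∧
        ∀ i, u i (Mstar i) = 1 → Mstar i ∈ G' := by
  classical
  have key : ∀ k : ℕ, ∀ M : Fin n → Fin m, Function.Injective M →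
      n ≤ k + (Finset.univ.filter (fun i => u i (M i) = 1)).card →
      ∃ Mstar : Fin n → Fin m, Function.Injective Mstar ∧
        (∀ i, u i (M i) ≤ u i (Mstar i)) ∧
        ∀ i, u i (Mstar i) = 1 → Mstar i ∈ G' := by
    intro k
    induction k with
    | zero =>
      intro M hM hcard
      obtain ⟨M0, hM0inj, hdom, hcase⟩ :=
        step_lemma n m hnm u hbin M' hM' hmax G' hG' M hM
      rcases hcase with hgood | hbig
      · exact ⟨M0, hM0inj, hdom, hgood⟩
      · exfalso
        have h1 : (Finset.univ.filter (fun i => u i (M0 i) = 1)).card ≤ n := by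
          simpa using Finset.card_le_univ (Finset.univ.filter (fun i => u i (M0 i) = 1))
        omega
    | succ k ih =>
      intro M hM hcard
      obtain ⟨M0, hM0inj, hdom, hcase⟩ :=
        step_lemma n m hnm u hbin M' hM' hmax G' hG' M hM
      rcases hcase with hgood | hbig
      · exact ⟨M0, hM0inj, hdom, hgood⟩
      · obtain ⟨Mstar, h1, h2, h3⟩ := ih M0 hM0inj (by omega)
        exact ⟨Mstar, h1, fun i => le_trans (hdom i) (h2 i), h3⟩
  intro M hM
  exact key n M hM (by omega)
end

section
/- Consider the repeated matching instance with n = m = 3 agents and goods where the utility of agent i for good j is given by the matrix U = [[5,2,1],[3,3,2],[2,5,1]], over T = 2 rounds. Then the maximum bottleneck value at round 1 is 2, the maximum bottleneck value at round 2 is 6, and no sequence of two matchings simultaneously achieves bottleneck value 2 at round 1 and bottleneck value 6 at round 2. In particular, no anytime optimal sequence exists. -/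
/-- The 3×3 utility matrix of the counterexample instance. -/
def U6 : Fin 3 → Fin 3 → ℝ := ![![5, 2, 1], ![3, 3, 2], ![2, 5, 1]]

/-- Bottleneck value after one round under matching σ. -/
noncomputable def bott1 (σ : Equiv.Perm (Fin 3)) : ℝ :=
  min (min (U6 0 (σ 0)) (U6 1 (σ 1))) (U6 2 (σ 2))

/-- Bottleneck value after two rounds under matchings σ, τ. -/
noncomputable def bott2 (σ τ : Equiv.Perm (Fin 3)) : ℝ :=
  min (min (U6 0 (σ 0) + U6 0 (τ 0)) (U6 1 (σ 1) + U6 1 (τ 1)))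
    (U6 2 (σ 2) + U6 2 (τ 2))

lemma perm3 : ∀ σ : Equiv.Perm (Fin 3), σ = 1 ∨ σ = Equiv.swap 0 1 ∨ σ = Equiv.swap 0 2 ∨
    σ = Equiv.swap 1 2 ∨ σ = Equiv.swap 0 1 * Equiv.swap 1 2 ∨
    σ = Equiv.swap 1 2 * Equiv.swap 0 1 := by decide

lemma p1_0 : (1 : Equiv.Perm (Fin 3)) 0 = 0 := rfl
lemma p1_1 : (1 : Equiv.Perm (Fin 3)) 1 = 1 := rfl
lemma p1_2 : (1 : Equiv.Perm (Fin 3)) 2 = 2 := rfl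
lemma p01_0 : (Equiv.swap 0 1 : Equiv.Perm (Fin 3)) 0 = 1 := rfl
lemma p01_1 : (Equiv.swap 0 1 : Equiv.Perm (Fin 3)) 1 = 0 := rfl
lemma p01_2 : (Equiv.swap 0 1 : Equiv.Perm (Fin 3)) 2 = 2 := rfl
lemma p02_0 : (Equiv.swap 0 2 : Equiv.Perm (Fin 3)) 0 = 2 := rfl
lemma p02_1 : (Equiv.swap 0 2 : Equiv.Perm (Fin 3)) 1 = 1 := rfl
lemma p02_2 : (Equiv.swap 0 2 : Equiv.Perm (Fin 3)) 2 = 0 := rfl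
lemma p12_0 : (Equiv.swap 1 2 : Equiv.Perm (Fin 3)) 0 = 0 := rfl
lemma p12_1 : (Equiv.swap 1 2 : Equiv.Perm (Fin 3)) 1 = 2 := rfl
lemma p12_2 : (Equiv.swap 1 2 : Equiv.Perm (Fin 3)) 2 = 1 := rfl
lemma c1_0 : (Equiv.swap 0 1 * Equiv.swap 1 2 : Equiv.Perm (Fin 3)) 0 = 1 := rfl
lemma c1_1 : (Equiv.swap 0 1 * Equiv.swap 1 2 : Equiv.Perm (Fin 3)) 1 = 2 := rfl
lemma c1_2 : (Equiv.swap 0 1 * Equiv.swap 1 2 : Equiv.Perm (Fin 3)) 2 = 0 := rfl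
lemma c2_0 : (Equiv.swap 1 2 * Equiv.swap 0 1 : Equiv.Perm (Fin 3)) 0 = 2 := rfl
lemma c2_1 : (Equiv.swap 1 2 * Equiv.swap 0 1 : Equiv.Perm (Fin 3)) 1 = 0 := rfl
lemma c2_2 : (Equiv.swap 1 2 * Equiv.swap 0 1 : Equiv.Perm (Fin 3)) 2 = 1 := rfl

attribute [local simp] p1_0 p1_1 p1_2 p01_0 p01_1 p01_2 p02_0 p02_1 p02_2 p12_0 p12_1 p12_2
  c1_0 c1_1 c1_2 c2_0 c2_1 c2_2

/-- In the instance with utilities U = [[5,2,1],[3,3,2],[2,5,1]] over T = 2 rounds,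
OPT(1) = 2, OPT(2) = 6, and no sequence of two matchings achieves both simultaneously;
in particular no anytime optimal sequence exists. -/
theorem no_anytime_optimal_counterexample :
    IsGreatest {x : ℝ | ∃ σ : Equiv.Perm (Fin 3), x = bott1 σ} 2 ∧
    IsGreatest {x : ℝ | ∃ σ τ : Equiv.Perm (Fin 3), x = bott2 σ τ} 6 ∧
    ¬ ∃ σ τ : Equiv.Perm (Fin 3), bott1 σ = 2 ∧ bott2 σ τ = 6 := by
  refine ⟨⟨⟨Equiv.swap 1 2, ?_⟩, ?_⟩, ⟨⟨1, Equiv.swap 1 2 * Equiv.swap 0 1, ?_⟩, ?_⟩, ?_⟩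
  · norm_num [bott1, U6, Matrix.cons_val_two]
  · rintro x ⟨σ, rfl⟩
    rcases perm3 σ with rfl | rfl | rfl | rfl | rfl | rfl <;> norm_num [bott1, U6, Matrix.cons_val_two]
  · norm_num [bott2, U6, Matrix.cons_val_two]
  · rintro x ⟨σ, τ, rfl⟩
    rcases perm3 σ with rfl | rfl | rfl | rfl | rfl | rfl <;>
      rcases perm3 τ with rfl | rfl | rfl | rfl | rfl | rfl <;> norm_num [bott2, U6, Matrix.cons_val_two]
  · rintro ⟨σ, τ, h1, h2⟩
    rcases perm3 σ with rfl | rfl | rfl | rfl | rfl | rfl <;>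
      rcases perm3 τ with rfl | rfl | rfl | rfl | rfl | rfl <;>
        norm_num [bott1, bott2, U6, Matrix.cons_val_two] at h1 <;> norm_num [bott1, bott2, U6, Matrix.cons_val_two] at h2
end

section
/- Let n agents have identical valuations u : G → ℝ≥0 over m ≥ n goods, and suppose T = kn for a positive integer k. Let G* be a set of the n most valuable goods. Then the allocation giving each agent exactly k copies of each good in G* (so each agent receives total value k·Σ_{g∈G*} u(g)) maximizes the minimum total value among all allocations in which each agent receives T goods and each good is used at most T times. That is, for any non-negative integer matrix A with row sums equal to T and column sums at most T, min_i Σ_j A_{ij} u(g_j) ≤ k·Σ_{g∈G*} u(g). -/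
/-- With identical valuations and T = k·n rounds, giving every agent k copies of each of
the n most valuable goods is optimal: any feasible allocation (row sums T, column sums ≤ T)
has some agent with value at most k · Σ_{g ∈ G*} u(g). -/
theorem identical_valuations_optimal_allocation (n m k : ℕ)
    (hn : 0 < n) (hnm : n ≤ m) (hk : 0 < k)
    (u : Fin m → ℝ) (hu : ∀ g, 0 ≤ u g)
    (Gstar : Finset (Fin m)) (hcard : Gstar.card = n)
    (htop : ∀ g ∈ Gstar, ∀ g' ∉ Gstar, u g' ≤ u g)
    (T : ℕ) (hT : T = k * n)
    (A : Matrix (Fin n) (Fin m) ℕ)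
    (hrow : ∀ i, ∑ j, A i j = T) (hcol : ∀ j, ∑ i, A i j ≤ T) :
    ∃ i : Fin n, ∑ j, (A i j : ℝ) * u j ≤ (k : ℝ) * ∑ g ∈ Gstar, u g := by
  classical
  by_contra hcon
  push_neg at hcon
  set S : ℝ := ∑ g ∈ Gstar, u g with hS
  -- a minimal element of Gstar
  have hGne : Gstar.Nonempty := Finset.card_pos.mp (by rw [hcard]; exact hn)
  obtain ⟨g0, hg0, hmin⟩ := Gstar.exists_min_image u hGne
  -- column sums as reals
  set c : Fin m → ℝ := fun j => ∑ i, (A i j : ℝ) with hc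
  have hc_nonneg : ∀ j, 0 ≤ c j := fun j =>
    Finset.sum_nonneg fun i _ => Nat.cast_nonneg _
  have hc_le : ∀ j, c j ≤ (T : ℝ) := by
    intro j
    have := hcol j
    have : ((∑ i, A i j : ℕ) : ℝ) ≤ (T : ℝ) := by exact_mod_cast this
    simpa [hc] using this
  -- total column sum = n * T
  have hcsum : ∑ j, c j = (n : ℝ) * T := by
    simp only [hc]
    rw [Finset.sum_comm]
    have : ∀ i : Fin n, ∑ j, (A i j : ℝ) = (T : ℝ) := by
      intro i
      have := hrow i
      exact_mod_cast this
    simp [this]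
  -- sum outside Gstar
  have hsplit : ∑ g ∈ Gstar, c g + ∑ j ∈ Gstarᶜ, c j = (n : ℝ) * T := by
    rw [Finset.sum_add_sum_compl, hcsum]
  have hout_sum : ∑ j ∈ Gstarᶜ, c j = ∑ g ∈ Gstar, ((T : ℝ) - c g) := by
    have : ∑ g ∈ Gstar, ((T : ℝ) - c g) = (n : ℝ) * T - ∑ g ∈ Gstar, c g := by
      rw [Finset.sum_sub_distrib, Finset.sum_const, hcard]
      push_cast
      ring
    linarith [hsplit]
  -- bound: total value ≤ T * S
  have htotal : ∑ j, c j * u j ≤ (T : ℝ) * S := by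
    have h1 : ∑ j ∈ Gstarᶜ, c j * u j ≤ ∑ j ∈ Gstarᶜ, c j * u g0 := by
      apply Finset.sum_le_sum
      intro j hj
      have hj' : j ∉ Gstar := Finset.mem_compl.mp hj
      exact mul_le_mul_of_nonneg_left (htop g0 hg0 j hj') (hc_nonneg j)
    have h2 : ∑ j ∈ Gstarᶜ, c j * u g0 = ∑ g ∈ Gstar, ((T : ℝ) - c g) * u g0 := by
      rw [← Finset.sum_mul, hout_sum, Finset.sum_mul]
    have h3 : ∑ g ∈ Gstar, ((T : ℝ) - c g) * u g0 ≤ ∑ g ∈ Gstar, ((T : ℝ) - c g) * u g := by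
      apply Finset.sum_le_sum
      intro g hg
      exact mul_le_mul_of_nonneg_left (hmin g hg) (by linarith [hc_le g])
    have h4 : ∑ g ∈ Gstar, c g * u g + ∑ g ∈ Gstar, ((T : ℝ) - c g) * u g = (T : ℝ) * S := by
      rw [← Finset.sum_add_distrib, hS, Finset.mul_sum]
      congr 1
      ext g
      ring
    calc ∑ j, c j * u j
        = ∑ g ∈ Gstar, c g * u g + ∑ j ∈ Gstarᶜ, c j * u j := by
          rw [Finset.sum_add_sum_compl]
      _ ≤ ∑ g ∈ Gstar, c g * u g + ∑ g ∈ Gstar, ((T : ℝ) - c g) * u g := by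
          linarith [h1, h2.le, h3]
      _ = (T : ℝ) * S := h4
  -- total value of agents = ∑ j, c j * u j
  have hagents : ∑ i, ∑ j, (A i j : ℝ) * u j = ∑ j, c j * u j := by
    rw [Finset.sum_comm]
    simp [hc, Finset.sum_mul]
  -- contradiction
  have hlb : (n : ℝ) * ((k : ℝ) * S) < ∑ i, ∑ j, (A i j : ℝ) * u j := by
    have := Finset.sum_lt_sum_of_nonempty (s := (Finset.univ : Finset (Fin n)))
      (f := fun _ => (k : ℝ) * S) (g := fun i => ∑ j, (A i j : ℝ) * u j)
      (Finset.univ_nonempty_iff.mpr ⟨⟨0, hn⟩⟩) (fun i _ => hcon i)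
    simpa using this
  have hTS : (T : ℝ) * S = (n : ℝ) * ((k : ℝ) * S) := by
    rw [hT]; push_cast; ring
  linarith [htotal, hagents ▸ hlb, hTS.le]
end

section
/- Let α₁, ..., α_d be positive reals summing to 1. Consider the greedy process that, at each round t = 1, 2, ..., T, selects an index k minimizing (n_k + 1)/α_k (where n_k is the number of times index k has been selected so far) and increments n_k. Then after every round t and for every index k, the count n_k satisfies n_k ≥ α_k · t − 1. -/
/-- Invariant of the greedy selection process: if at each round the index k minimizing
(n_k + 1)/α_k is selected and incremented, then after every round t each count satisfies
n_k ≥ α_k·t − 1. -/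
theorem greedy_selection_invariant (d : ℕ) (α : Fin d → ℝ)
    (hα : ∀ k, 0 < α k) (hsum : ∑ k, α k = 1)
    (counts : ℕ → Fin d → ℕ) (sel : ℕ → Fin d)
    (h0 : ∀ k, counts 0 k = 0)
    (hstep : ∀ t, counts (t + 1) =
      Function.update (counts t) (sel t) (counts t (sel t) + 1))
    (hmin : ∀ t k, ((counts t (sel t) : ℝ) + 1) / α (sel t) ≤
      ((counts t k : ℝ) + 1) / α k) :
    ∀ (t : ℕ) (k : Fin d), α k * t - 1 ≤ counts t k := by
  have hstep' : ∀ t j, counts (t+1) j = if j = sel t then counts t j + 1 else counts t j := by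
    intro t j
    rw [hstep t]
    by_cases h : j = sel t
    · subst h; simp
    · simp [Function.update_of_ne h, h]
  have hmono1 : ∀ t j, counts t j ≤ counts (t+1) j := by
    intro t j; rw [hstep' t j]; split <;> omega
  have hmono : ∀ j t t', t ≤ t' → counts t j ≤ counts t' j := by
    intro j t t' h
    induction t' with
    | zero => have : t = 0 := by omega
              subst this; exact le_rfl
    | succ n ih =>
      rcases Nat.lt_or_ge t (n+1) with h' | h'
      · exact le_trans (ih (by omega)) (hmono1 n j)
      · have : t = n+1 := by omega
        subst this; exact le_rfl
  have hsumc : ∀ t, ∑ j, counts t j = t := by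
    intro t
    induction t with
    | zero => simp [h0]
    | succ n ih =>
      have : ∀ j, counts (n+1) j = counts n j + (if j = sel n then 1 else 0) := by
        intro j; rw [hstep' n j]; split <;> omega
      calc ∑ j, counts (n+1) j = ∑ j, (counts n j + (if j = sel n then 1 else 0)) := by
            exact Finset.sum_congr rfl (fun j _ => this j)
        _ = (∑ j, counts n j) + ∑ j, (if j = sel n then 1 else 0) := Finset.sum_add_distrib
        _ = n + 1 := by rw [ih]; simp
  have hlast : ∀ T j, counts T j = 0 ∨ ∃ t < T, sel t = j ∧ counts T j = counts t j + 1 := by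
    intro T j
    induction T with
    | zero => left; exact h0 j
    | succ n ih =>
      by_cases h : j = sel n
      · right; exact ⟨n, by omega, h.symm, by rw [hstep' n j]; simp [h]⟩
      · rw [hstep' n j, if_neg h]
        rcases ih with h1 | ⟨t, ht, hs, hc⟩
        · left; exact h1
        · right; exact ⟨t, by omega, hs, hc⟩
  by_contra hcon
  push_neg at hcon
  obtain ⟨T, k, hk⟩ := hcon
  have hkT : (counts T k : ℝ) + 1 < α k * T := by linarith
  have hbound : ∀ j, j ≠ k → (counts T j : ℝ) ≤ α j * T := by
    intro j hj
    rcases hlast T j with h1 | ⟨t, ht, hs, hc⟩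
    · rw [h1]
      have : (0:ℝ) ≤ α j * T := mul_nonneg (le_of_lt (hα j)) (Nat.cast_nonneg T)
      simpa using this
    · have h2 := hmin t k
      rw [hs] at h2
      have h3 : (counts t k : ℝ) ≤ counts T k := by
        exact_mod_cast hmono k t T (le_of_lt ht)
      have h4 : ((counts t k : ℝ) + 1) / α k < T := by
        rw [div_lt_iff₀ (hα k)]
        calc (counts t k : ℝ) + 1 ≤ (counts T k : ℝ) + 1 := by linarith
          _ < α k * T := hkT
          _ = T * α k := by ring
      have h5 : ((counts t j : ℝ) + 1) / α j < T := lt_of_le_of_lt h2 h4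
      rw [div_lt_iff₀ (hα j)] at h5
      rw [hc]; push_cast; nlinarith [h5]
  have hT : (T:ℝ) = ∑ j, (counts T j : ℝ) := by
    rw [← Nat.cast_sum]; exact_mod_cast (hsumc T).symm
  have hle : ∑ j, (counts T j : ℝ) ≤ ∑ j, (α j * T - (if j = k then (1:ℝ) else 0)) := by
    apply Finset.sum_le_sum
    intro j _
    by_cases h : j = k
    · subst h; simp only [if_pos rfl, if_true]; linarith
    · simp only [if_neg h, sub_zero]; exact hbound j h
  have hsum2 : ∑ j, (α j * T - (if j = k then (1:ℝ) else 0)) = T - 1 := by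
    rw [Finset.sum_sub_distrib, ← Finset.sum_mul, hsum]
    simp
  rw [hsum2] at hle
  linarith [hT ▸ hle]
end

section
/- For any instance with n = 2 agents, m ≥ 2 goods, and non-negative utilities, and any horizon T, there exists a sequence of matchings S = (M¹, ..., M^T) such that for every t ∈ [T], the bottleneck value b^t(S) = min_i Σ_{s≤t} u_i(M^s(i)) equals OPT(t), the maximum bottleneck value achievable over all sequences of t matchings. -/
open Finset

private lemma core_exchange (a a' b b' t k K : ℝ)
    (ha : a' < a) (hb : b' < b)
    (hk1 : k * ((a - a') + (b - b')) ≤ (b - a') * t + (a - a'))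
    (hk2 : (b - a') * t + (a - a') < (k + 1) * ((a - a') + (b - b')))
    (hK : K ≤ k - 1 ∨ K = k ∨ k + 1 ≤ K) :
    min ((t - K) * a' + K * a) (K * b' + (t - K) * b) ≤
      min ((t - k) * a' + k * a) (k * b' + (t - k) * b) := by
  rcases hK with h | h | h
  · refine le_trans (min_le_left _ _) (le_min ?_ ?_)
    · nlinarith [mul_nonneg (by linarith : (0:ℝ) ≤ a - a') (by linarith : (0:ℝ) ≤ k - K)]
    · nlinarith [mul_nonneg (by linarith : (0:ℝ) ≤ a - a') (by linarith : (0:ℝ) ≤ k - 1 - K)]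
  · subst h; exact le_refl _
  · refine le_trans (min_le_right _ _) (le_min ?_ ?_)
    · nlinarith [mul_nonneg (by linarith : (0:ℝ) ≤ b - b') (by linarith : (0:ℝ) ≤ K - k - 1)]
    · nlinarith [mul_nonneg (by linarith : (0:ℝ) ≤ b - b') (by linarith : (0:ℝ) ≤ K - k)]

private lemma inj_pair {m : ℕ} {p q : Fin m} (h : p ≠ q) : Function.Injective ![p, q] := by
  intro i j hij
  fin_cases i <;> fin_cases j <;> simp_all

private lemma sum_le_const {t : ℕ} {f : ℕ → ℝ} {cst : ℝ} (h : ∀ s, f s ≤ cst) :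
    ∑ s ∈ Finset.range t, f s ≤ (t : ℝ) * cst := by
  have := Finset.sum_le_card_nsmul (Finset.range t) f cst (fun x _ => h x)
  simpa [card_range, nsmul_eq_mul] using this

private lemma const_helper (m : ℕ) (u : Fin 2 → Fin m → ℝ) (p q : Fin m) (hpq : p ≠ q) (T : ℕ)
    (hub : ∀ t : ℕ, ∀ S' : ℕ → Fin 2 → Fin m, (∀ s, Function.Injective (S' s)) →
      min (∑ s ∈ Finset.range t, u 0 (S' s 0)) (∑ s ∈ Finset.range t, u 1 (S' s 1)) ≤
      min ((t : ℝ) * u 0 p) ((t : ℝ) * u 1 q)) :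
    ∃ S : ℕ → Fin 2 → Fin m, (∀ s, Function.Injective (S s)) ∧
      ∀ t ≤ T,
        IsGreatest
          {x : ℝ | ∃ S' : ℕ → Fin 2 → Fin m, (∀ s, Function.Injective (S' s)) ∧
            x = min (∑ s ∈ Finset.range t, u 0 (S' s 0))
                  (∑ s ∈ Finset.range t, u 1 (S' s 1))}
          (min (∑ s ∈ Finset.range t, u 0 (S s 0))
            (∑ s ∈ Finset.range t, u 1 (S s 1))) := by
  refine ⟨fun _ => ![p, q], fun _ => inj_pair hpq, fun t _ => ⟨⟨_, fun _ => inj_pair hpq, rfl⟩, ?_⟩⟩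
  rintro x ⟨S', hS', rfl⟩
  have h := hub t S' hS'
  have e0 : (∑ _s ∈ Finset.range t, u 0 ((![p, q] : Fin 2 → Fin m) 0)) = (t : ℝ) * u 0 p := by
    simp [Finset.sum_const, card_range, nsmul_eq_mul]
  have e1 : (∑ _s ∈ Finset.range t, u 1 ((![p, q] : Fin 2 → Fin m) 1)) = (t : ℝ) * u 1 q := by
    simp [Finset.sum_const, card_range, nsmul_eq_mul]
  rw [e0, e1]
  exact h

private lemma main_case (m : ℕ) (u : Fin 2 → Fin m → ℝ) (g gA gB : Fin m)
    (hAg : gA ≠ g) (hBg : gB ≠ g)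
    (hmax1 : ∀ h, u 1 h ≤ u 1 g)
    (hA' : ∀ h, h ≠ g → u 0 h ≤ u 0 gA) (hB' : ∀ h, h ≠ g → u 1 h ≤ u 1 gB)
    (ha : u 0 gA < u 0 g) (hb : u 1 gB < u 1 g)
    (h2c1 : u 0 gA < u 1 g) (h2c2 : u 1 gB < u 0 g) (T : ℕ) :
    ∃ S : ℕ → Fin 2 → Fin m, (∀ s, Function.Injective (S s)) ∧
      ∀ t ≤ T,
        IsGreatest
          {x : ℝ | ∃ S' : ℕ → Fin 2 → Fin m, (∀ s, Function.Injective (S' s)) ∧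
            x = min (∑ s ∈ Finset.range t, u 0 (S' s 0))
                  (∑ s ∈ Finset.range t, u 1 (S' s 1))}
          (min (∑ s ∈ Finset.range t, u 0 (S s 0))
            (∑ s ∈ Finset.range t, u 1 (S s 1))) := by
  classical
  set a : ℝ := u 0 g with hadef
  set a' : ℝ := u 0 gA with ha'def
  set b : ℝ := u 1 g with hbdef
  set b' : ℝ := u 1 gB with hb'def
  set d : ℝ := (a - a') + (b - b') with hddef
  have hd : 0 < d := by simp only [hddef]; linarith
  set c : ℝ := (b - a') / d with hcdef
  set β : ℝ := (a - a') / d with hβdef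
  have hc0 : 0 < c := div_pos (by linarith) hd
  have hc1 : c < 1 := by
    rw [hcdef, div_lt_one hd]; simp only [hddef]; linarith
  have hβ0 : 0 < β := div_pos (by linarith) hd
  have hβ1 : β < 1 := by
    rw [hβdef, div_lt_one hd]; simp only [hddef]; linarith
  have hcd : c * d = b - a' := div_mul_cancel₀ _ (ne_of_gt hd)
  have hβd : β * d = a - a' := div_mul_cancel₀ _ (ne_of_gt hd)
  set k : ℕ → ℕ := fun t => ⌊c * t + β⌋₊ with hkdef
  have hknn : ∀ t : ℕ, (0:ℝ) ≤ c * t + β := by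
    intro t; positivity
  have hfl1 : ∀ t : ℕ, (k t : ℝ) ≤ c * t + β := fun t => Nat.floor_le (hknn t)
  have hfl2 : ∀ t : ℕ, c * t + β < k t + 1 := fun t => Nat.lt_floor_add_one _
  have hk0 : k 0 = 0 := by
    rw [hkdef]; simp only [Nat.cast_zero, mul_zero, zero_add]
    exact Nat.floor_eq_zero.2 hβ1
  have hstep : ∀ s : ℕ, k (s+1) = k s ∨ k (s+1) = k s + 1 := by
    intro s
    have h1 : k s ≤ k (s+1) := by
      apply Nat.floor_le_floor
      push_cast
      nlinarith
    have h2 : k (s+1) < k s + 2 := by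
      have hlt : c * ((s:ℕ)+1 : ℕ) + β < ((k s + 2 : ℕ) : ℝ) := by
        push_cast
        nlinarith [hfl2 s]
      exact (Nat.floor_lt (hknn (s+1))).2 hlt
    omega
  set S : ℕ → Fin 2 → Fin m :=
    fun s => if k (s+1) = k s + 1 then ![g, gB] else ![gA, g] with hSdef
  have hinjS : ∀ s, Function.Injective (S s) := by
    intro s
    rw [hSdef]
    dsimp only
    split
    · exact inj_pair (Ne.symm hBg)
    · exact inj_pair hAg
  have hsum : ∀ t : ℕ,
      (∑ s ∈ Finset.range t, u 0 (S s 0)) = ((t:ℝ) - k t) * a' + (k t : ℝ) * a ∧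
      (∑ s ∈ Finset.range t, u 1 (S s 1)) = (k t : ℝ) * b' + ((t:ℝ) - k t) * b := by
    intro t
    induction t with
    | zero => simp [hk0]
    | succ n ih =>
      obtain ⟨ih0, ih1⟩ := ih
      rcases hstep n with h | h
      · have hS : S n = ![gA, g] := by rw [hSdef]; dsimp only; rw [if_neg (by omega)]
        constructor
        · rw [Finset.sum_range_succ, ih0, hS, h]
          simp only [Matrix.cons_val_zero]
          push_cast
          rw [← ha'def]
          ring
        · rw [Finset.sum_range_succ, ih1, hS, h]
          simp only [Matrix.cons_val_one, Matrix.head_cons]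
          push_cast
          rw [← hbdef]
          ring
      · have hS : S n = ![g, gB] := by rw [hSdef]; dsimp only; rw [if_pos h]
        constructor
        · rw [Finset.sum_range_succ, ih0, hS, h]
          simp only [Matrix.cons_val_zero]
          push_cast
          rw [← hadef]
          ring
        · rw [Finset.sum_range_succ, ih1, hS, h]
          simp only [Matrix.cons_val_one, Matrix.head_cons]
          push_cast
          rw [← hb'def]
          ring
  have hub : ∀ t : ℕ, ∀ S' : ℕ → Fin 2 → Fin m, (∀ s, Function.Injective (S' s)) →
      min (∑ s ∈ Finset.range t, u 0 (S' s 0)) (∑ s ∈ Finset.range t, u 1 (S' s 1)) ≤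
      min (((t:ℝ) - k t) * a' + (k t : ℝ) * a) ((k t : ℝ) * b' + ((t:ℝ) - k t) * b) := by
    intro t S' hS'
    set P : ℕ → Prop := fun s => S' s 0 = g with hPdef
    set K1 : ℕ := ((Finset.range t).filter P).card with hK1def
    set K2 : ℕ := ((Finset.range t).filter (fun s => ¬ P s)).card with hK2def
    have hK12 : K1 + K2 = t := by
      rw [hK1def, hK2def, Finset.card_filter_add_card_filter_not, card_range]
    have hK2r : (K2 : ℝ) = (t : ℝ) - K1 := by
      have := hK12; push_cast [← this]; ring
    have h0 : (∑ s ∈ Finset.range t, u 0 (S' s 0)) ≤ (K1:ℝ) * a + (K2:ℝ) * a' := by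
      rw [← Finset.sum_filter_add_sum_filter_not (Finset.range t) P]
      have b1 : (∑ s ∈ (Finset.range t).filter P, u 0 (S' s 0)) ≤ K1 • a := by
        apply Finset.sum_le_card_nsmul
        intro x hx
        have hxP : P x := (Finset.mem_filter.1 hx).2
        rw [hPdef] at hxP
        rw [hxP]
      have b2 : (∑ s ∈ (Finset.range t).filter (fun s => ¬ P s), u 0 (S' s 0)) ≤ K2 • a' := by
        apply Finset.sum_le_card_nsmul
        intro x hx
        have hxP : ¬ P x := (Finset.mem_filter.1 hx).2
        exact hA' _ hxP
      have := add_le_add b1 b2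
      simpa [nsmul_eq_mul] using this
    have h1 : (∑ s ∈ Finset.range t, u 1 (S' s 1)) ≤ (K1:ℝ) * b' + (K2:ℝ) * b := by
      rw [← Finset.sum_filter_add_sum_filter_not (Finset.range t) P]
      have b1 : (∑ s ∈ (Finset.range t).filter P, u 1 (S' s 1)) ≤ K1 • b' := by
        apply Finset.sum_le_card_nsmul
        intro x hx
        have hxP : P x := (Finset.mem_filter.1 hx).2
        rw [hPdef] at hxP
        apply hB'
        intro hgg
        have : S' x 1 = S' x 0 := by rw [hxP, hgg]
        have h01 : (1 : Fin 2) = 0 := hS' x this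
        exact absurd h01 (by decide)
      have b2 : (∑ s ∈ (Finset.range t).filter (fun s => ¬ P s), u 1 (S' s 1)) ≤ K2 • b := by
        apply Finset.sum_le_card_nsmul
        intro x _
        exact hmax1 _
      have := add_le_add b1 b2
      simpa [nsmul_eq_mul] using this
    have h0' : (∑ s ∈ Finset.range t, u 0 (S' s 0)) ≤ ((t:ℝ) - K1) * a' + (K1:ℝ) * a := by
      rw [← hK2r]; linarith
    have h1' : (∑ s ∈ Finset.range t, u 1 (S' s 1)) ≤ (K1:ℝ) * b' + ((t:ℝ) - K1) * b := by
      rw [← hK2r]; linarith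
    have hk1' : (k t : ℝ) * ((a - a') + (b - b')) ≤ (b - a') * t + (a - a') := by
      have h := mul_le_mul_of_nonneg_right (hfl1 t) hd.le
      calc (k t : ℝ) * ((a - a') + (b - b')) = (k t : ℝ) * d := by rw [hddef]
        _ ≤ (c * t + β) * d := h
        _ = (c * d) * t + β * d := by ring
        _ = (b - a') * t + (a - a') := by rw [hcd, hβd]
    have hk2' : (b - a') * t + (a - a') < ((k t : ℝ) + 1) * ((a - a') + (b - b')) := by
      have h := mul_lt_mul_of_pos_right (hfl2 t) hd
      calc (b - a') * t + (a - a') = (c * d) * t + β * d := by rw [hcd, hβd]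
        _ = (c * t + β) * d := by ring
        _ < ((k t : ℝ) + 1) * d := h
        _ = ((k t : ℝ) + 1) * ((a - a') + (b - b')) := by rw [hddef]
    have htri : (K1:ℝ) ≤ (k t : ℝ) - 1 ∨ (K1:ℝ) = (k t : ℝ) ∨ (k t : ℝ) + 1 ≤ (K1:ℝ) := by
      rcases Nat.lt_trichotomy K1 (k t) with h | h | h
      · left
        have : K1 + 1 ≤ k t := h
        have : ((K1 + 1 : ℕ) : ℝ) ≤ (k t : ℝ) := Nat.cast_le.2 this
        push_cast at this; linarith
      · right; left; exact_mod_cast h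
      · right; right
        have : k t + 1 ≤ K1 := h
        have : ((k t + 1 : ℕ) : ℝ) ≤ (K1 : ℝ) := Nat.cast_le.2 this
        push_cast at this; linarith
    have hcore := core_exchange a a' b b' (t:ℝ) (k t : ℝ) (K1:ℝ) ha hb hk1' hk2' htri
    exact le_trans (min_le_min h0' h1') hcore
  refine ⟨S, hinjS, fun t _ => ⟨⟨S, hinjS, rfl⟩, ?_⟩⟩
  rintro x ⟨S', hS', rfl⟩
  obtain ⟨hs0, hs1⟩ := hsum t
  rw [hs0, hs1]
  exact hub t S' hS'

/-- For two agents there always exists an anytime optimal sequence of matchings: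
a sequence S whose bottleneck value at every round t ≤ T is the greatest bottleneck
value achievable by any sequence of t matchings. -/
theorem anytime_optimal_exists_two_agents (m : ℕ) (hm : 2 ≤ m)
    (u : Fin 2 → Fin m → ℝ) (hu : ∀ i g, 0 ≤ u i g) (T : ℕ) :
    ∃ S : ℕ → Fin 2 → Fin m, (∀ s, Function.Injective (S s)) ∧
      ∀ t ≤ T,
        IsGreatest
          {x : ℝ | ∃ S' : ℕ → Fin 2 → Fin m, (∀ s, Function.Injective (S' s)) ∧
            x = min (∑ s ∈ Finset.range t, u 0 (S' s 0))
                  (∑ s ∈ Finset.range t, u 1 (S' s 1))}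
          (min (∑ s ∈ Finset.range t, u 0 (S s 0))
            (∑ s ∈ Finset.range t, u 1 (S s 1))) := by
  classical
  haveI : Nonempty (Fin m) := ⟨⟨0, by omega⟩⟩
  by_cases hC1 : ∃ p q : Fin m, p ≠ q ∧ (∀ h, u 0 h ≤ u 0 p) ∧ (∀ h, u 1 h ≤ u 1 q)
  · obtain ⟨p, q, hpq, hp, hq⟩ := hC1
    refine const_helper m u p q hpq T ?_
    intro t S' hS'
    exact min_le_min (sum_le_const (fun s => hp _)) (sum_le_const (fun s => hq _))
  · -- common unique maximizer
    obtain ⟨g0, -, hg0⟩ := Finset.exists_max_image Finset.univ (u 0) Finset.univ_nonempty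
    obtain ⟨g1, -, hg1⟩ := Finset.exists_max_image Finset.univ (u 1) Finset.univ_nonempty
    have hmax0 : ∀ h, u 0 h ≤ u 0 g0 := fun h => hg0 h (Finset.mem_univ h)
    have hmax1' : ∀ h, u 1 h ≤ u 1 g1 := fun h => hg1 h (Finset.mem_univ h)
    have hg01 : g0 = g1 := by
      by_contra hne
      exact hC1 ⟨g0, g1, hne, hmax0, hmax1'⟩
    subst hg01
    set g : Fin m := g0 with hgdef
    have hmax1 : ∀ h, u 1 h ≤ u 1 g := hmax1'
    have hstrict0 : ∀ h, h ≠ g → u 0 h < u 0 g := by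
      intro h hne
      rcases lt_or_ge (u 0 h) (u 0 g) with hlt | hle
      · exact hlt
      · exact absurd ⟨h, g, hne, fun h' => le_trans (hmax0 h') hle, hmax1⟩ hC1
    have hstrict1 : ∀ h, h ≠ g → u 1 h < u 1 g := by
      intro h hne
      rcases lt_or_ge (u 1 h) (u 1 g) with hlt | hle
      · exact hlt
      · exact absurd ⟨g, h, Ne.symm hne, hmax0, fun h' => le_trans (hmax1 h') hle⟩ hC1
    have hne : ((Finset.univ : Finset (Fin m)).erase g).Nonempty := by
      obtain ⟨h0, hh0⟩ := Fintype.exists_ne_of_one_lt_card (by simpa using (by omega : 1 < m)) g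
      exact ⟨h0, Finset.mem_erase.2 ⟨hh0, Finset.mem_univ _⟩⟩
    obtain ⟨gA, hgAmem, hgAmax⟩ := Finset.exists_max_image _ (u 0) hne
    obtain ⟨gB, hgBmem, hgBmax⟩ := Finset.exists_max_image _ (u 1) hne
    have hAg : gA ≠ g := (Finset.mem_erase.1 hgAmem).1
    have hBg : gB ≠ g := (Finset.mem_erase.1 hgBmem).1
    have hA' : ∀ h, h ≠ g → u 0 h ≤ u 0 gA := fun h hh =>
      hgAmax h (Finset.mem_erase.2 ⟨hh, Finset.mem_univ _⟩)
    have hB' : ∀ h, h ≠ g → u 1 h ≤ u 1 gB := fun h hh =>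
      hgBmax h (Finset.mem_erase.2 ⟨hh, Finset.mem_univ _⟩)
    have ha : u 0 gA < u 0 g := hstrict0 _ hAg
    have hb : u 1 gB < u 1 g := hstrict1 _ hBg
    rcases le_or_gt (u 1 g) (u 0 gA) with h2a | h2c1
    · -- agent 1's max is at most agent 0's second best: constant (gA, g) is optimal
      refine const_helper m u gA g hAg T ?_
      intro t S' hS'
      refine le_min ?_ ?_
      · refine le_trans (min_le_right _ _) (le_trans (sum_le_const (fun s => hmax1 _)) ?_)
        exact mul_le_mul_of_nonneg_left h2a (by positivity)
      · exact le_trans (min_le_right _ _) (sum_le_const (fun s => hmax1 _))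
    · rcases le_or_gt (u 0 g) (u 1 gB) with h2b | h2c2
      · refine const_helper m u g gB (Ne.symm hBg) T ?_
        intro t S' hS'
        refine le_min ?_ ?_
        · exact le_trans (min_le_left _ _) (sum_le_const (fun s => hmax0 _))
        · refine le_trans (min_le_left _ _) (le_trans (sum_le_const (fun s => hmax0 _)) ?_)
          exact mul_le_mul_of_nonneg_left h2b (by positivity)
      · exact main_case m u g gA gB hAg hBg hmax1 hA' hB' ha hb h2c1 h2c2 T
end

section
/- Let n agents with identical valuation u : G → ℝ≥0 be matched over T rounds by the following greedy rule: at each round, agents pick goods one at a time in increasing order of their cumulative value so far, each choosing a most valuable remaining good. Let Δ be the difference between the largest value of a good and the n-th largest value of a good. Then for every t ∈ [T], the resulting sequence S satisfies b^t(S) ≥ OPT(t) − Δ. -/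
/-- Identical valuations: the greedy sequence (each round, agents pick most valuable
remaining goods in increasing order of cumulative value) achieves, at every round t ≤ T,
a bottleneck value within Δ of optimal, where Δ is the gap between the most valuable
good and the n-th most valuable good (the least valuable good in a top-n set G*). -/
theorem greedy_identical_anytime_additive (n m : ℕ) (hn : 0 < n) (hnm : n ≤ m)
    (u : Fin m → ℝ) (hu : ∀ g, 0 ≤ u g)
    (Gstar : Finset (Fin m)) (hcard : Gstar.card = n)
    (htop : ∀ g ∈ Gstar, ∀ g' ∉ Gstar, u g' ≤ u g)
    (T : ℕ) (S : ℕ → Fin n → Fin m)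
    (hSinj : ∀ s, Function.Injective (S s))
    (hpick : ∀ (s : ℕ) (i : Fin n) (g : Fin m), (∀ i', S s i' ≠ g) → u g ≤ u (S s i))
    (horder : ∀ (s : ℕ) (i j : Fin n),
      (∑ r ∈ Finset.range s, u (S r i)) < (∑ r ∈ Finset.range s, u (S r j)) →
      u (S s j) ≤ u (S s i)) :
    ∀ t ≤ T, ∀ S' : ℕ → Fin n → Fin m, (∀ s, Function.Injective (S' s)) →
      Finset.univ.inf' ⟨⟨0, hn⟩, Finset.mem_univ _⟩
          (fun i => ∑ s ∈ Finset.range t, u (S' s i)) ≤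
        Finset.univ.inf' ⟨⟨0, hn⟩, Finset.mem_univ _⟩
            (fun i => ∑ s ∈ Finset.range t, u (S s i)) +
          (Finset.univ.sup' ⟨⟨0, lt_of_lt_of_le hn hnm⟩, Finset.mem_univ _⟩ u -
            Gstar.inf' (Finset.card_pos.mp (by rw [hcard]; exact hn)) u) := by
  classical
  have hGne : Gstar.Nonempty := Finset.card_pos.mp (by rw [hcard]; exact hn)
  have hune : (Finset.univ : Finset (Fin m)).Nonempty :=
    ⟨⟨0, lt_of_lt_of_le hn hnm⟩, Finset.mem_univ _⟩
  set MIN := Gstar.inf' (Finset.card_pos.mp (by rw [hcard]; exact hn)) u with hMIN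
  set MAX := Finset.univ.sup' ⟨⟨0, lt_of_lt_of_le hn hnm⟩, Finset.mem_univ _⟩ u with hMAX
  have hMM : MIN ≤ MAX := by
    obtain ⟨g0, hg0⟩ := hGne
    exact (Finset.inf'_le u hg0).trans (Finset.le_sup' u (Finset.mem_univ g0))
  -- general comparison of sums over equal-cardinality sets
  have key : ∀ (P Q : Finset (Fin m)), P.card = Q.card →
      (∀ g ∈ Q \ P, ∀ g' ∈ P \ Q, u g ≤ u g') → ∑ g ∈ Q, u g ≤ ∑ g ∈ P, u g := by
    intro P Q hc hle
    have h1 : ∑ g ∈ Q ∩ P, u g + ∑ g ∈ Q \ P, u g = ∑ g ∈ Q, u g :=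
      Finset.sum_inter_add_sum_sdiff _ _ _
    have h2 : ∑ g ∈ P ∩ Q, u g + ∑ g ∈ P \ Q, u g = ∑ g ∈ P, u g :=
      Finset.sum_inter_add_sum_sdiff _ _ _
    have hcd : (Q \ P).card = (P \ Q).card := Finset.card_sdiff_comm hc.symm
    have h3 : ∑ g ∈ Q \ P, u g ≤ ∑ g ∈ P \ Q, u g := by
      rcases (P \ Q).eq_empty_or_nonempty with he | hne
      · have hq : Q \ P = ∅ := Finset.card_eq_zero.mp (by rw [hcd, he]; simp)
        simp [hq, he]
      · have hstep : ∑ g ∈ Q \ P, u g ≤ (Q \ P).card • (P \ Q).inf' hne u :=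
          Finset.sum_le_card_nsmul _ _ _
            (fun g hg => Finset.le_inf' hne _ (fun g' hg' => hle g hg g' hg'))
        have hstep2 : (P \ Q).card • (P \ Q).inf' hne u ≤ ∑ g ∈ P \ Q, u g :=
          Finset.card_nsmul_le_sum _ _ _ (fun g hg => Finset.inf'_le _ hg)
        rw [hcd] at hstep
        exact hstep.trans hstep2
    have h4 : ∑ g ∈ Q ∩ P, u g = ∑ g ∈ P ∩ Q, u g := by rw [Finset.inter_comm]
    linarith
  -- each greedy pick is at most MAX
  have pick_le : ∀ s i, u (S s i) ≤ MAX := fun s i => Finset.le_sup' u (Finset.mem_univ _)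
  -- each greedy pick is at least MIN
  have pick_ge : ∀ s i, MIN ≤ u (S s i) := by
    intro s i
    set P := (Finset.univ.image (S s)).erase (S s i) with hP
    have hPcard : P.card = n - 1 := by
      rw [hP, Finset.card_erase_of_mem (Finset.mem_image_of_mem _ (Finset.mem_univ i)),
        Finset.card_image_of_injective _ (hSinj s), Finset.card_univ, Fintype.card_fin]
    have hlt : P.card < Gstar.card := by rw [hPcard, hcard]; omega
    have hne : (Gstar \ P).Nonempty := by
      rw [← Finset.card_pos]
      have := Finset.le_card_sdiff P Gstar
      omega
    obtain ⟨g, hg⟩ := hne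
    obtain ⟨hgG, hgP⟩ := Finset.mem_sdiff.mp hg
    by_cases hgpick : ∃ i', S s i' = g
    · obtain ⟨i', hi'⟩ := hgpick
      have hmem : g ∈ Finset.univ.image (S s) := by
        rw [← hi']; exact Finset.mem_image_of_mem _ (Finset.mem_univ i')
      have hgi : g = S s i := by
        by_contra hneq
        exact hgP (Finset.mem_erase.mpr ⟨hneq, hmem⟩)
      rw [← hgi]
      exact Finset.inf'_le u hgG
    · push_neg at hgpick
      exact (Finset.inf'_le u hgG).trans (hpick s i g hgpick)
  -- greedy cumulative values stay within MAX - MIN of each other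
  have spread : ∀ t (i j : Fin n),
      ∑ r ∈ Finset.range t, u (S r i) ≤ (∑ r ∈ Finset.range t, u (S r j)) + (MAX - MIN) := by
    intro t
    induction t with
    | zero => intro i j; simp; linarith
    | succ t ih =>
      intro i j
      rw [Finset.sum_range_succ, Finset.sum_range_succ]
      rcases lt_or_ge (∑ r ∈ Finset.range t, u (S r j)) (∑ r ∈ Finset.range t, u (S r i))
        with h | h
      · have hlt := horder t j i h
        linarith [ih i j]
      · linarith [pick_le t i, pick_ge t j]
  -- each greedy round dominates Gstar in total value
  have sumS_ge : ∀ s, ∑ g ∈ Gstar, u g ≤ ∑ i, u (S s i) := by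
    intro s
    have himg : ∑ i, u (S s i) = ∑ g ∈ Finset.univ.image (S s), u g :=
      (Finset.sum_image (fun a _ b _ h => hSinj s h)).symm
    rw [himg]
    apply key
    · rw [Finset.card_image_of_injective _ (hSinj s), Finset.card_univ, Fintype.card_fin, hcard]
    · intro g hg g' hg'
      obtain ⟨hg1, hg2⟩ := Finset.mem_sdiff.mp hg
      have h1 : ∀ i', S s i' ≠ g := by
        intro i' he
        exact hg2 (he ▸ Finset.mem_image_of_mem _ (Finset.mem_univ i'))
      obtain ⟨i', _, hi'⟩ := Finset.mem_image.mp (Finset.mem_sdiff.mp hg').1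
      rw [← hi']
      exact hpick s i' g h1
  -- any matching's round total is at most Gstar's total
  have sumS'_le : ∀ (S' : ℕ → Fin n → Fin m), (∀ s, Function.Injective (S' s)) → ∀ s,
      ∑ i, u (S' s i) ≤ ∑ g ∈ Gstar, u g := by
    intro S' hinj s
    have himg : ∑ i, u (S' s i) = ∑ g ∈ Finset.univ.image (S' s), u g :=
      (Finset.sum_image (fun a _ b _ h => hinj s h)).symm
    rw [himg]
    apply key
    · rw [Finset.card_image_of_injective _ (hinj s), Finset.card_univ, Fintype.card_fin, hcard]
    · intro g hg g' hg'
      exact htop g' (Finset.mem_sdiff.mp hg').1 g (Finset.mem_sdiff.mp hg).2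
  -- main argument
  intro t _ S' hinj
  set A := Finset.univ.inf' (⟨⟨0, hn⟩, Finset.mem_univ _⟩ : (Finset.univ : Finset (Fin n)).Nonempty)
    (fun i => ∑ s ∈ Finset.range t, u (S' s i)) with hA
  set B := Finset.univ.inf' (⟨⟨0, hn⟩, Finset.mem_univ _⟩ : (Finset.univ : Finset (Fin n)).Nonempty)
    (fun i => ∑ s ∈ Finset.range t, u (S s i)) with hB
  have hnpos : (0 : ℝ) < n := by exact_mod_cast hn
  have h1 : (n : ℝ) * A ≤ ∑ i, ∑ s ∈ Finset.range t, u (S' s i) := by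
    have := Finset.card_nsmul_le_sum Finset.univ
      (fun i => ∑ s ∈ Finset.range t, u (S' s i)) A
      (fun i _ => Finset.inf'_le _ (Finset.mem_univ i))
    rwa [Finset.card_univ, Fintype.card_fin, nsmul_eq_mul] at this
  have h2 : ∑ i, ∑ s ∈ Finset.range t, u (S' s i) ≤ ∑ i, ∑ s ∈ Finset.range t, u (S s i) := by
    rw [Finset.sum_comm, Finset.sum_comm (γ := Fin n)]
    exact Finset.sum_le_sum (fun s _ => (sumS'_le S' hinj s).trans (sumS_ge s))
  have h3 : ∑ i, ∑ s ∈ Finset.range t, u (S s i) ≤ (n : ℝ) * (B + (MAX - MIN)) := by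
    have hbd : ∀ i : Fin n, ∑ s ∈ Finset.range t, u (S s i) ≤ B + (MAX - MIN) := by
      intro i
      have := Finset.le_inf' (⟨⟨0, hn⟩, Finset.mem_univ _⟩ :
          (Finset.univ : Finset (Fin n)).Nonempty)
        (f := fun j => ∑ s ∈ Finset.range t, u (S s j))
        (a := ∑ s ∈ Finset.range t, u (S s i) - (MAX - MIN))
        (fun j _ => by linarith [spread t i j])
      rw [← hB] at this
      linarith
    calc ∑ i, ∑ s ∈ Finset.range t, u (S s i)
        ≤ ∑ _i : Fin n, (B + (MAX - MIN)) := Finset.sum_le_sum (fun i _ => hbd i)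
      _ = (n : ℝ) * (B + (MAX - MIN)) := by
          rw [Finset.sum_const, Finset.card_univ, Fintype.card_fin, nsmul_eq_mul]
  have : (n : ℝ) * A ≤ (n : ℝ) * (B + (MAX - MIN)) := le_trans h1 (le_trans h2 h3)
  have hfin : A ≤ B + (MAX - MIN) := le_of_mul_le_mul_left this hnpos
  exact hfin
end

section
/- For identical valuations, the average cumulative value upper-bounds the optimal bottleneck value: for any instance with n agents sharing valuation u, any t, and any sequence S produced by a rule that in each round assigns the n most valuable goods (one per agent), (1/n)·Σ_{i∈N} v_i^t(S) ≥ OPT(t). -/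
/-- Identical valuations: for any sequence S that each round assigns a set of n goods of
maximum total value, the average cumulative value upper-bounds the optimal bottleneck
value at every round: (1/n)·Σ_i v_i^t(S) ≥ b^t(S') for every sequence S'. -/
theorem average_bounds_opt_identical (n m : ℕ) (hn : 0 < n) (hnm : n ≤ m)
    (u : Fin m → ℝ) (hu : ∀ g, 0 ≤ u g)
    (S : ℕ → Fin n → Fin m) (hSinj : ∀ s, Function.Injective (S s))
    (htop : ∀ (s : ℕ) (M' : Fin n → Fin m), Function.Injective M' →
      ∑ i, u (M' i) ≤ ∑ i, u (S s i)) :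
    ∀ (t : ℕ) (S' : ℕ → Fin n → Fin m), (∀ s, Function.Injective (S' s)) →
      Finset.univ.inf' ⟨⟨0, hn⟩, Finset.mem_univ _⟩
          (fun i => ∑ s ∈ Finset.range t, u (S' s i)) ≤
        (1 / (n : ℝ)) * ∑ i, ∑ s ∈ Finset.range t, u (S s i) := by
  intro t S' hS'
  set b := Finset.univ.inf' ⟨⟨0, hn⟩, Finset.mem_univ _⟩
      (fun i => ∑ s ∈ Finset.range t, u (S' s i)) with hb
  have hnpos : (0:ℝ) < n := by exact_mod_cast hn
  rw [one_div, inv_mul_eq_div, le_div_iff₀ hnpos]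
  calc b * n = ∑ _i : Fin n, b := by
        simp [Finset.sum_const, mul_comm]
    _ ≤ ∑ i, ∑ s ∈ Finset.range t, u (S' s i) := by
        apply Finset.sum_le_sum
        intro i _
        exact Finset.inf'_le _ (Finset.mem_univ i)
    _ = ∑ s ∈ Finset.range t, ∑ i, u (S' s i) := Finset.sum_comm
    _ ≤ ∑ s ∈ Finset.range t, ∑ i, u (S s i) := by
        apply Finset.sum_le_sum
        intro s _
        exact htop s (S' s) (hS' s)
    _ = ∑ i, ∑ s ∈ Finset.range t, u (S s i) := Finset.sum_comm
end

section
/- Consider bipartite maximum weight matching with weights w(i,g) = r(i,g)·m^{n−π(i)} where r(i,g) = |{g' ∈ G : u_i(g') ≤ u_i(g)}| ∈ [1,m]. For any two matchings M₀ and M with the property that some agent i satisfies r(i, M₀(i)) > r(i, M(i)) and all agents i' with π(i') ≤ π(i) satisfy r(i', M₀(i')) ≥ r(i', M(i')), the total weight of M₀ strictly exceeds that of M: the gain over agents with priority at most π(i) is at least m^{n−π(i)}, while the loss over agents with priority greater than π(i) is at most m^{n−π(i)} − 1. -/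
/-- Weight-separation for the priority weights w(i,g) = r(i,g)·m^(n−π(i)) (written
0-indexed as m^(n−1−π(i))): if M₀ improves agent i's rank and weakly improves all agents
with priority at most π(i), then the gain over those agents is at least m^(n−1−π(i)), the
loss over lower-priority agents is at most m^(n−1−π(i)) − 1, and hence M₀ has strictly
larger total weight than M. -/
theorem weight_separation (n m : ℕ) (hnm : n ≤ m)
    (u : Fin n → Fin m → ℝ) (π : Equiv.Perm (Fin n))
    (r : Fin n → Fin m → ℕ)
    (hr : ∀ i g, r i g = (Finset.univ.filter (fun g' => u i g' ≤ u i g)).card)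
    (M₀ M : Fin n → Fin m)
    (hM₀ : Function.Injective M₀) (hM : Function.Injective M)
    (i : Fin n) (hi : r i (M i) < r i (M₀ i))
    (hprio : ∀ i', π i' ≤ π i → r i' (M i') ≤ r i' (M₀ i')) :
    ((m : ℤ) ^ (n - 1 - (π i : ℕ)) ≤
      ∑ i' ∈ Finset.univ.filter (fun i' => π i' ≤ π i),
        ((r i' (M₀ i') : ℤ) - (r i' (M i') : ℤ)) * (m : ℤ) ^ (n - 1 - (π i' : ℕ))) ∧
    (∑ i' ∈ Finset.univ.filter (fun i' => π i < π i'),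
        ((r i' (M i') : ℤ) - (r i' (M₀ i') : ℤ)) * (m : ℤ) ^ (n - 1 - (π i' : ℕ)) ≤
      (m : ℤ) ^ (n - 1 - (π i : ℕ)) - 1) ∧
    (∑ i', r i' (M i') * m ^ (n - 1 - (π i' : ℕ)) <
      ∑ i', r i' (M₀ i') * m ^ (n - 1 - (π i' : ℕ))) := by
  have hn : 0 < n := i.pos
  have hm1 : 0 < m := lt_of_lt_of_le hn hnm
  have hrlb : ∀ i' g, 1 ≤ r i' g := by
    intro i' g
    rw [hr]
    exact Finset.card_pos.mpr ⟨g, by simp⟩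
  have hrub : ∀ i' g, r i' g ≤ m := by
    intro i' g
    rw [hr]
    simpa using Finset.card_filter_le Finset.univ (fun g' => u i' g' ≤ u i' g)
  -- Part A
  have hA : (m : ℤ) ^ (n - 1 - (π i : ℕ)) ≤
      ∑ i' ∈ Finset.univ.filter (fun i' => π i' ≤ π i),
        ((r i' (M₀ i') : ℤ) - (r i' (M i') : ℤ)) * (m : ℤ) ^ (n - 1 - (π i' : ℕ)) := by
    have hmem : i ∈ Finset.univ.filter (fun i' => π i' ≤ π i) := by simp
    have hnn : ∀ i' ∈ Finset.univ.filter (fun i' => π i' ≤ π i),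
        0 ≤ ((r i' (M₀ i') : ℤ) - (r i' (M i') : ℤ)) * (m : ℤ) ^ (n - 1 - (π i' : ℕ)) := by
      intro i' hi'
      apply mul_nonneg
      · have := hprio i' (by simpa using hi')
        have : (r i' (M i') : ℤ) ≤ (r i' (M₀ i') : ℤ) := by exact_mod_cast this
        linarith
      · positivity
    calc (m : ℤ) ^ (n - 1 - (π i : ℕ))
        ≤ ((r i (M₀ i) : ℤ) - (r i (M i) : ℤ)) * (m : ℤ) ^ (n - 1 - (π i : ℕ)) := by
          apply le_mul_of_one_le_left (by positivity)
          have : (r i (M i) : ℤ) < (r i (M₀ i) : ℤ) := by exact_mod_cast hi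
          linarith
      _ ≤ _ := Finset.single_le_sum hnn hmem
  -- Part B
  have hB : ∑ i' ∈ Finset.univ.filter (fun i' => π i < π i'),
        ((r i' (M i') : ℤ) - (r i' (M₀ i') : ℤ)) * (m : ℤ) ^ (n - 1 - (π i' : ℕ)) ≤
      (m : ℤ) ^ (n - 1 - (π i : ℕ)) - 1 := by
    have step1 : ∑ i' ∈ Finset.univ.filter (fun i' => π i < π i'),
        ((r i' (M i') : ℤ) - (r i' (M₀ i') : ℤ)) * (m : ℤ) ^ (n - 1 - (π i' : ℕ)) ≤
        ∑ i' ∈ Finset.univ.filter (fun i' => π i < π i'),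
        ((m : ℤ) - 1) * (m : ℤ) ^ (n - 1 - (π i' : ℕ)) := by
      apply Finset.sum_le_sum
      intro i' _
      apply mul_le_mul_of_nonneg_right _ (by positivity)
      have h1 := hrub i' (M i')
      have h2 := hrlb i' (M₀ i')
      have h1' : (r i' (M i') : ℤ) ≤ (m : ℤ) := by exact_mod_cast h1
      have h2' : (1 : ℤ) ≤ (r i' (M₀ i') : ℤ) := by exact_mod_cast h2
      linarith
    have step2 : ∑ i' ∈ Finset.univ.filter (fun i' => π i < π i'),
        ((m : ℤ) - 1) * (m : ℤ) ^ (n - 1 - (π i' : ℕ)) ≤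
        ∑ j ∈ Finset.range (n - 1 - (π i : ℕ)), ((m : ℤ) - 1) * (m : ℤ) ^ j := by
      have hinj : Set.InjOn (fun i' => n - 1 - (π i' : ℕ))
          (Finset.univ.filter (fun i' => π i < π i')) := by
        intro a ha b hb hab
        simp only [Finset.coe_filter, Set.mem_setOf_eq] at ha hb
        have hab' : n - 1 - (π a : ℕ) = n - 1 - (π b : ℕ) := hab
        have ha' : (π a : ℕ) < n := (π a).isLt
        have hb' : (π b : ℕ) < n := (π b).isLt
        have ha2 : (π i : ℕ) < (π a : ℕ) := ha.2
        have hb2 : (π i : ℕ) < (π b : ℕ) := hb.2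
        have : (π a : ℕ) = (π b : ℕ) := by omega
        have : π a = π b := Fin.ext this
        exact π.injective this
      have himg : ∀ i' ∈ Finset.univ.filter (fun i' => π i < π i'),
          (n - 1 - (π i' : ℕ)) ∈ Finset.range (n - 1 - (π i : ℕ)) := by
        intro i' hi'
        simp only [Finset.mem_filter] at hi'
        have h1 : (π i : ℕ) < (π i' : ℕ) := hi'.2
        have h2 : (π i' : ℕ) < n := (π i').isLt
        simp only [Finset.mem_range]
        omega
      calc ∑ i' ∈ Finset.univ.filter (fun i' => π i < π i'),
            ((m : ℤ) - 1) * (m : ℤ) ^ (n - 1 - (π i' : ℕ))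
          = ∑ j ∈ (Finset.univ.filter (fun i' => π i < π i')).image
              (fun i' => n - 1 - (π i' : ℕ)), ((m : ℤ) - 1) * (m : ℤ) ^ j := by
            rw [Finset.sum_image (fun a ha b hb => hinj (by simpa using ha) (by simpa using hb))]
        _ ≤ _ := by
            apply Finset.sum_le_sum_of_subset_of_nonneg
            · intro j hj
              simp only [Finset.mem_image] at hj
              obtain ⟨i', hi', rfl⟩ := hj
              exact himg i' hi'
            · intro j _ _
              have : (1 : ℤ) ≤ (m : ℤ) := by exact_mod_cast hm1
              have : (0:ℤ) ≤ (m:ℤ) - 1 := by linarith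
              positivity
    have step3 : ∑ j ∈ Finset.range (n - 1 - (π i : ℕ)), ((m : ℤ) - 1) * (m : ℤ) ^ j =
        (m : ℤ) ^ (n - 1 - (π i : ℕ)) - 1 := by
      have := geom_sum_mul (m : ℤ) (n - 1 - (π i : ℕ))
      calc ∑ j ∈ Finset.range (n - 1 - (π i : ℕ)), ((m : ℤ) - 1) * (m : ℤ) ^ j
          = (∑ j ∈ Finset.range (n - 1 - (π i : ℕ)), (m : ℤ) ^ j) * ((m:ℤ) - 1) := by
            rw [Finset.sum_mul]; exact Finset.sum_congr rfl fun j _ => by ring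
        _ = _ := this
    linarith
  refine ⟨hA, hB, ?_⟩
  -- Part C
  have hfe : Finset.univ.filter (fun i' => ¬ π i' ≤ π i) =
      Finset.univ.filter (fun i' : Fin n => π i < π i') := by
    ext x; simp [not_le]
  have hsplit := Finset.sum_filter_add_sum_filter_not Finset.univ (fun i' => π i' ≤ π i)
      (fun i' => ((r i' (M₀ i') : ℤ) - (r i' (M i') : ℤ)) * (m : ℤ) ^ (n - 1 - (π i' : ℕ)))
  rw [hfe] at hsplit
  have hneg : ∑ i' ∈ Finset.univ.filter (fun i' : Fin n => π i < π i'),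
      ((r i' (M₀ i') : ℤ) - (r i' (M i') : ℤ)) * (m : ℤ) ^ (n - 1 - (π i' : ℕ)) =
      - ∑ i' ∈ Finset.univ.filter (fun i' : Fin n => π i < π i'),
      ((r i' (M i') : ℤ) - (r i' (M₀ i') : ℤ)) * (m : ℤ) ^ (n - 1 - (π i' : ℕ)) := by
    rw [← Finset.sum_neg_distrib]
    exact Finset.sum_congr rfl fun x _ => by ring
  have key : (0 : ℤ) < ∑ i',
      ((r i' (M₀ i') : ℤ) - (r i' (M i') : ℤ)) * (m : ℤ) ^ (n - 1 - (π i' : ℕ)) := by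
    rw [← hsplit, hneg]
    linarith
  have hdiff : ∑ i',
      ((r i' (M₀ i') : ℤ) - (r i' (M i') : ℤ)) * (m : ℤ) ^ (n - 1 - (π i' : ℕ)) =
      (∑ i', (r i' (M₀ i') : ℤ) * (m : ℤ) ^ (n - 1 - (π i' : ℕ))) -
      (∑ i', (r i' (M i') : ℤ) * (m : ℤ) ^ (n - 1 - (π i' : ℕ))) := by
    rw [← Finset.sum_sub_distrib]
    exact Finset.sum_congr rfl fun x _ => by ring
  rw [hdiff] at key
  have : (∑ i', (r i' (M i') : ℤ) * (m : ℤ) ^ (n - 1 - (π i' : ℕ))) <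
      (∑ i', (r i' (M₀ i') : ℤ) * (m : ℤ) ^ (n - 1 - (π i' : ℕ))) := by linarith
  exact_mod_cast this
end

section
/- Let u_i : G → {0,1} be binary utilities for agents N = [n] over goods G, and suppose a matching M is Pareto optimal and some matching M' satisfies more agents than M (i.e., |{i : u_i(M'(i)) = 1}| > |{i : u_i(M(i)) = 1}|) is impossible; that is, every Pareto optimal matching under binary utilities satisfies the maximum possible number of agents. -/
/-- Key exchange lemma: if an injective `M'` satisfies strictly more agents than `M`,
then (by induction on the number of disagreements between `M'` and `M`) there is an
injective `M''` that weakly dominates `M` and strictly improves some agent. -/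
lemma binary_exchange_aux (n m : ℕ) (u : Fin n → Fin m → ℕ)
    (hbin : ∀ i g, u i g = 0 ∨ u i g = 1)
    (M : Fin n → Fin m) (hM : Function.Injective M) :
    ∀ d : ℕ, ∀ M' : Fin n → Fin m, Function.Injective M' →
      (Finset.univ.filter (fun i => u i (M i) = 1)).card <
        (Finset.univ.filter (fun i => u i (M' i) = 1)).card →
      (Finset.univ.filter (fun i => M' i ≠ M i)).card ≤ d →
      ∃ M'' : Fin n → Fin m, Function.Injective M'' ∧
        (∀ i, u i (M i) ≤ u i (M'' i)) ∧ ∃ i, u i (M i) < u i (M'' i) := by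
  intro d
  induction d with
  | zero =>
    intro M' hM' hcount hd
    exfalso
    have heq : ∀ i, M' i = M i := by
      intro i
      by_contra h
      have : i ∈ Finset.univ.filter (fun i => M' i ≠ M i) := by
        simp [h]
      have := Finset.card_pos.mpr ⟨i, this⟩
      omega
    have hfeq : (Finset.univ.filter (fun i => u i (M i) = 1)) =
        (Finset.univ.filter (fun i => u i (M' i) = 1)) := by
      apply Finset.filter_congr
      intro i _
      rw [heq i]
    rw [hfeq] at hcount
    exact lt_irrefl _ hcount
  | succ d ih =>
    intro M' hM' hcount hd
    by_cases hdom : ∀ i, u i (M i) ≤ u i (M' i)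
    · refine ⟨M', hM', hdom, ?_⟩
      have hns : ¬ (Finset.univ.filter (fun i => u i (M' i) = 1)) ⊆
          (Finset.univ.filter (fun i => u i (M i) = 1)) := by
        intro hsub
        exact absurd (Finset.card_le_card hsub) (by omega)
      obtain ⟨i, hi, hni⟩ := Finset.not_subset.mp hns
      simp only [Finset.mem_filter, Finset.mem_univ, true_and] at hi hni
      refine ⟨i, ?_⟩
      rcases hbin i (M i) with h0 | h1
      · omega
      · exact absurd h1 hni
    · push_neg at hdom
      obtain ⟨j, hj⟩ := hdom
      have hMj1 : u j (M j) = 1 := by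
        rcases hbin j (M j) with h0 | h1 <;> omega
      have hM'j0 : u j (M' j) = 0 := by
        rcases hbin j (M' j) with h0 | h1 <;> omega
      have hgg' : M j ≠ M' j := by
        intro h
        rw [h] at hMj1
        omega
      set M'' : Fin n → Fin m := fun i => Equiv.swap (M j) (M' j) (M' i) with hM''
      have hM''inj : Function.Injective M'' :=
        (Equiv.swap (M j) (M' j)).injective.comp hM'
      have hM''j : M'' j = M j := by
        simp [hM'', Equiv.swap_apply_right]
      have hM''other : ∀ i, M' i ≠ M j → M' i ≠ M' j → M'' i = M' i := by
        intro i h1 h2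
        simp [hM'', Equiv.swap_apply_of_ne_of_ne h1 h2]
      have hg'unique : ∀ i, M' i = M' j → i = j := fun i h => hM' h
      -- new count is at least old count
      have hcount'' : (Finset.univ.filter (fun i => u i (M i) = 1)).card <
          (Finset.univ.filter (fun i => u i (M'' i) = 1)).card := by
        set A := Finset.univ.filter (fun i => u i (M' i) = 1) with hA
        set B := Finset.univ.filter (fun i => u i (M'' i) = 1) with hB
        have hAB : (A \ B).card ≤ 1 := by
          apply Finset.card_le_one.mpr
          intro a ha b hb
          simp only [Finset.mem_sdiff, hA, hB, Finset.mem_filter, Finset.mem_univ,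
            true_and] at ha hb
          have hag : M' a = M j := by
            by_contra hne
            by_cases h2 : M' a = M' j
            · have := hg'unique a h2
              subst this
              omega
            · rw [hM''other a hne h2] at ha
              exact ha.2 ha.1
          have hbg : M' b = M j := by
            by_contra hne
            by_cases h2 : M' b = M' j
            · have := hg'unique b h2
              subst this
              omega
            · rw [hM''other b hne h2] at hb
              exact hb.2 hb.1
          exact hM' (hag.trans hbg.symm)
        have hjBA : j ∈ B \ A := by
          simp only [Finset.mem_sdiff, hA, hB, Finset.mem_filter, Finset.mem_univ,
            true_and, hM''j]
          exact ⟨hMj1, by omega⟩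
        have h1 : (B \ A).card ≥ 1 := Finset.card_pos.mpr ⟨j, hjBA⟩
        have e1 : (A ∩ B).card + (A \ B).card = A.card :=
          Finset.card_inter_add_card_sdiff A B
        have e2 : (B ∩ A).card + (B \ A).card = B.card :=
          Finset.card_inter_add_card_sdiff B A
        have e3 : (A ∩ B).card = (B ∩ A).card := by rw [Finset.inter_comm]
        omega
      -- disagreement set shrinks
      have hdsub : (Finset.univ.filter (fun i => M'' i ≠ M i)) ⊆
          (Finset.univ.filter (fun i => M' i ≠ M i)) \ {j} := by
        intro i hi
        simp only [Finset.mem_filter, Finset.mem_univ, true_and] at hi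
        have hij : i ≠ j := by
          intro h; subst h; exact hi hM''j
        simp only [Finset.mem_sdiff, Finset.mem_filter, Finset.mem_univ, true_and,
          Finset.mem_singleton]
        refine ⟨?_, hij⟩
        intro hMi
        by_cases h1 : M i = M j
        · exact hij (hM h1)
        · by_cases h2 : M i = M' j
          · exact hij (hM' (hMi.trans h2))
          · rw [hM''other i (hMi.trans_ne h1) (hMi.trans_ne h2), hMi] at hi
            exact hi rfl
      have hjD : j ∈ Finset.univ.filter (fun i => M' i ≠ M i) := by
        simp only [Finset.mem_filter, Finset.mem_univ, true_and]
        exact fun h => hgg' h.symm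
      have hd'' : (Finset.univ.filter (fun i => M'' i ≠ M i)).card ≤ d := by
        have h1 := Finset.card_le_card hdsub
        have h2 : ((Finset.univ.filter (fun i => M' i ≠ M i)) \ {j}).card =
            (Finset.univ.filter (fun i => M' i ≠ M i)).card - 1 := by
          rw [Finset.sdiff_singleton_eq_erase, Finset.card_erase_of_mem hjD]
        have h3 : 1 ≤ (Finset.univ.filter (fun i => M' i ≠ M i)).card :=
          Finset.card_pos.mpr ⟨j, hjD⟩
        omega
      exact ih M'' hM''inj hcount'' hd''

/-- Under binary valuations, every Pareto optimal matching satisfies the maximum possible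
number of agents: no matching satisfies strictly more agents. -/
theorem binary_paretoOptimal_is_maximum (n m : ℕ) (hnm : n ≤ m)
    (u : Fin n → Fin m → ℕ) (hbin : ∀ i g, u i g = 0 ∨ u i g = 1)
    (M : Fin n → Fin m) (hM : Function.Injective M)
    (hPO : ¬ ∃ M' : Fin n → Fin m, Function.Injective M' ∧
      (∀ i, u i (M i) ≤ u i (M' i)) ∧ ∃ i, u i (M i) < u i (M' i)) :
    ∀ M' : Fin n → Fin m, Function.Injective M' →
      (Finset.univ.filter (fun i => u i (M' i) = 1)).card ≤
        (Finset.univ.filter (fun i => u i (M i) = 1)).card := by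
  intro M' hM'
  by_contra hlt
  push_neg at hlt
  exact hPO (binary_exchange_aux n m u hbin M hM
    (Finset.univ.filter (fun i => M' i ≠ M i)).card M' hM' hlt le_rfl)
end

section
/- Let α₁, ..., α_d > 0 sum to 1 and let M₁, ..., M_d be n×n permutation matrices with B = Σ_k α_k M_k. Let u_i : [n] → ℝ≥0 and suppose Σ_j B_{ij} u_i(j) ≥ b for all i. Run the greedy selection (at each round pick k minimizing (n_k+1)/α_k and increment n_k) for T rounds, letting n_{k,t} be the count of index k after round t. Then for every round t and agent i, Σ_k n_{k,t} · u_i(M_k(i)) ≥ t·b − d·max_j u_i(j), where M_k(i) denotes the column matched to row i in permutation matrix M_k. -/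
/-- Combining the greedy selection invariant with the Birkhoff decomposition
B = Σ_k α_k M_k (permutation matrices M_k given by permutations σ_k): if each agent's
fractional value under B is at least b, then after every round t of the greedy process
each agent's accumulated value Σ_k n_{k,t}·u_i(σ_k(i)) is at least t·b − d·max_j u_i(j). -/
theorem greedy_decomposition_value_bound (n d : ℕ)
    (α : Fin d → ℝ) (hα : ∀ k, 0 < α k) (hsum : ∑ k, α k = 1)
    (σ : Fin d → Equiv.Perm (Fin n))
    (B : Matrix (Fin n) (Fin n) ℝ)
    (hB : ∀ i j, B i j = ∑ k, α k * (if σ k i = j then 1 else 0))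
    (u : Fin n → Fin n → ℝ) (hu : ∀ i j, 0 ≤ u i j)
    (b : ℝ) (hb : ∀ i, b ≤ ∑ j, B i j * u i j)
    (counts : ℕ → Fin d → ℕ) (sel : ℕ → Fin d)
    (h0 : ∀ k, counts 0 k = 0)
    (hstep : ∀ t, counts (t + 1) =
      Function.update (counts t) (sel t) (counts t (sel t) + 1))
    (hmin : ∀ t k, ((counts t (sel t) : ℝ) + 1) / α (sel t) ≤
      ((counts t k : ℝ) + 1) / α k) :
    ∀ (t : ℕ) (i : Fin n),
      (t : ℝ) * b - (d : ℝ) * (Finset.univ.sup' ⟨i, Finset.mem_univ i⟩ (u i)) ≤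
        ∑ k, (counts t k : ℝ) * u i (σ k i) := by
  -- monotonicity of counts
  have hmono : ∀ k s t, s ≤ t → counts s k ≤ counts t k := by
    intro k s t hst
    induction t, hst using Nat.le_induction with
    | base => exact le_refl _
    | succ t hst ih =>
      refine ih.trans ?_
      rw [hstep t]
      by_cases h : k = sel t
      · subst h; simp
      · rw [Function.update_of_ne h]
  -- total count equals t
  have hsumt : ∀ t, ∑ k, counts t k = t := by
    intro t
    induction t with
    | zero => simp [h0]
    | succ t ih =>
      rw [hstep t, Finset.sum_update_of_mem (Finset.mem_univ _)]
      rw [Finset.sum_eq_sum_sdiff_singleton_add (Finset.mem_univ (sel t)) (counts t)] at ih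
      omega
  -- last selection structure
  have hlast : ∀ t k, counts t k = 0 ∨
      ∃ s, s < t ∧ sel s = k ∧ counts t k = counts s k + 1 := by
    intro t
    induction t with
    | zero => intro k; left; exact h0 k
    | succ t ih =>
      intro k
      by_cases h : sel t = k
      · right
        refine ⟨t, Nat.lt_succ_self t, h, ?_⟩
        rw [hstep t, ← h, Function.update_self]
      · have hck : counts (t + 1) k = counts t k := by
          rw [hstep t]; exact Function.update_of_ne (fun hh => h hh.symm) _ _
        rw [hck]
        rcases ih k with hz | ⟨s, hs, hsel, hc⟩
        · left; exact hz
        · right; exact ⟨s, hs.trans (Nat.lt_succ_self t), hsel, hc⟩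
  -- the greedy invariant
  have hinv : ∀ t k, α k * t - 1 ≤ (counts t k : ℝ) := by
    intro t k
    by_contra hlt
    push_neg at hlt
    have hkey : ∀ j, j ≠ k → (counts t j : ℝ) ≤ α j * t := by
      intro j hjk
      rcases hlast t j with hz | ⟨s, hst, hsel, hc⟩
      · rw [hz]
        push_cast
        exact mul_nonneg (hα j).le (Nat.cast_nonneg t)
      · have h1 := hmin s k
        rw [hsel] at h1
        have h2 : (counts s k : ℝ) ≤ counts t k := by
          exact_mod_cast hmono k s t hst.le
        have hαk := hα k
        have hαj := hα j
        -- (counts s j + 1)/α j ≤ (counts s k + 1)/α k < t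
        have h3 : ((counts s k : ℝ) + 1) / α k < t := by
          rw [div_lt_iff₀ hαk]
          nlinarith
        have h4 : ((counts s j : ℝ) + 1) / α j < t := lt_of_le_of_lt h1 h3
        rw [div_lt_iff₀ hαj] at h4
        rw [hc]
        push_cast
        nlinarith
    -- sum up: contradiction
    have hf : (t : ℝ) = ∑ j, (counts t j : ℝ) := by
      rw [← Nat.cast_sum, hsumt t]
    have hg : ∑ j, α j * t = (t : ℝ) := by
      rw [← Finset.sum_mul, hsum, one_mul]
    have hsplitf := Finset.sum_eq_sum_sdiff_singleton_add (Finset.mem_univ k)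
      (fun j => (counts t j : ℝ))
    have hsplitg := Finset.sum_eq_sum_sdiff_singleton_add (Finset.mem_univ k)
      (fun j => α j * t)
    have hle : ∑ j ∈ Finset.univ \ {k}, (counts t j : ℝ) ≤
        ∑ j ∈ Finset.univ \ {k}, α j * t := by
      refine Finset.sum_le_sum ?_
      intro j hj
      rw [Finset.mem_sdiff, Finset.mem_singleton] at hj
      exact hkey j hj.2
    rw [hsplitf] at hf
    rw [hsplitg] at hg
    linarith
  intro t i
  have hb' := hb i
  set Mx := Finset.univ.sup' ⟨i, Finset.mem_univ i⟩ (u i) with hMx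
  have humax : ∀ j, u i j ≤ Mx := fun j => Finset.le_sup' _ (Finset.mem_univ j)
  have h1 : ∑ k, (α k * t - 1) * u i (σ k i) ≤ ∑ k, (counts t k : ℝ) * u i (σ k i) :=
    Finset.sum_le_sum fun k _ => mul_le_mul_of_nonneg_right (hinv t k) (hu i _)
  have h2 : ∑ k, (α k * t - 1) * u i (σ k i) =
      (t : ℝ) * ∑ k, α k * u i (σ k i) - ∑ k, u i (σ k i) := by
    rw [Finset.mul_sum, ← Finset.sum_sub_distrib]
    exact Finset.sum_congr rfl fun k _ => by ring
  have h3 : ∑ j, B i j * u i j = ∑ k, α k * u i (σ k i) := by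
    simp only [hB, Finset.sum_mul]
    rw [Finset.sum_comm]
    refine Finset.sum_congr rfl fun k _ => ?_
    simp [mul_assoc]
  have h4 : ∑ k, u i (σ k i) ≤ (d : ℝ) * Mx := by
    calc ∑ k, u i (σ k i) ≤ ∑ _k : Fin d, Mx := Finset.sum_le_sum fun k _ => humax _
    _ = (d : ℝ) * Mx := by simp [mul_comm]
  have h5 : (t : ℝ) * b ≤ (t : ℝ) * ∑ k, α k * u i (σ k i) := by
    rw [← h3]
    exact mul_le_mul_of_nonneg_left hb' (Nat.cast_nonneg t)
  linarith
end
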